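/- arXiv:1102.5031 — 5 statements merged into one kernel-verified Lean document; each statement's English description precedes it below -/
import Mathlib

section
/- For every integer k with 1 ≤ k ≤ 4 there exists a polynomial M(y_1, …, y_k) of degree k with nonnegative coefficients such that for all p, q ∈ 𝒫, all α ∈ [0,1], and all x ∈ ℝ, the density r_α = α·p + (1−α)·q satisfies |(ln r_α)^{(k)}(x)| ≤ M( max{ |p'(x)|/p(x), |q'(x)|/q(x) }, …, max{ |p^{(k)}(x)|/p(x), |q^{(k)}(x)|/q(x) } ). -/
open MeasureTheory Filter Set

noncomputable section

/-- The class `𝒫` of smooth, positive, rapidly decaying probability densities. -/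
def memP (p : ℝ → ℝ) : Prop :=
  (∫ x, p x) = 1 ∧
  (∀ x, 0 < p x) ∧
  ContDiff ℝ 4 p ∧
  (∀ m : ℝ, 0 < m → ∀ j ≤ 4,
    Tendsto (fun x => |x| ^ m * iteratedDeriv j p x) (atTop ⊔ atBot) (nhds 0)) ∧
  (∃ a : ℝ, 0 < a ∧ ∀ j, 1 ≤ j → j ≤ 4 →
    Tendsto (fun x => |x| ^ (-a) * (iteratedDeriv j p x / p x)) (atTop ⊔ atBot) (nhds 0))

/-- `j`-th derivative of the log-likelihood of `p`. -/
def ld (p : ℝ → ℝ) (j : ℕ) (x : ℝ) : ℝ := iteratedDeriv j (fun t => Real.log (p t)) x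

def uncurry3 (K : ℝ → ℝ → ℝ → ℝ) : ℝ × ℝ × ℝ → ℝ := fun v => K v.1 v.2.1 v.2.2

/-- The class `ℛ₁`. -/
def memR1 (K : ℝ → ℝ → ℝ → ℝ) : Prop :=
  ContDiff ℝ 2 (uncurry3 K) ∧
  ∃ C r : ℝ, 0 < C ∧ 0 < r ∧ ∀ i ≤ 2, ∀ x y0 y1 : ℝ,
    ‖iteratedFDeriv ℝ i (uncurry3 K) (x, y0, y1)‖ ≤
      C * ((1 + |x|) * (1 + |y0|) * (1 + |y1|)) ^ r

def uncurry4 (s : ℝ → ℝ → ℝ → ℝ → ℝ) : ℝ × ℝ × ℝ × ℝ → ℝ :=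
  fun v => s v.1 v.2.1 v.2.2.1 v.2.2.2

/-- The class `ℛ₂`. -/
def memR2 (s : ℝ → ℝ → ℝ → ℝ → ℝ) : Prop :=
  ContDiff ℝ 4 (uncurry4 s) ∧
  ∃ C r : ℝ, 0 < C ∧ 0 < r ∧ ∀ i ≤ 4, ∀ x y0 y1 y2 : ℝ,
    ‖iteratedFDeriv ℝ i (uncurry4 s) (x, y0, y1, y2)‖ ≤
      C * ((1 + |x|) * (1 + |y0|) * (1 + |y1|) * (1 + |y2|)) ^ r

/-- Propriety of a scoring rule relative to `𝒫`. -/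
def Proper (S : ℝ → (ℝ → ℝ) → ℝ) : Prop :=
  ∀ p q, memP p → memP q → (∫ x, S x p * p x) ≤ ∫ x, S x q * p x

/-- Strict propriety relative to `𝒫`. -/
def StrictlyProper (S : ℝ → (ℝ → ℝ) → ℝ) : Prop :=
  ∀ p q, memP p → memP q →
    (∫ x, S x p * p x) ≤ (∫ x, S x q * p x) ∧
    ((∫ x, S x p * p x) = (∫ x, S x q * p x) → q = p)

/-- Concavity of a functional on `𝒫`. -/
def ConcaveOnP (Φ : (ℝ → ℝ) → ℝ) : Prop :=
  ∀ p q, memP p → memP q → ∀ t ∈ Icc (0:ℝ) 1,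
    t * Φ p + (1 - t) * Φ q ≤ Φ (fun x => t * p x + (1 - t) * q x)

/-- Strict concavity of a functional on `𝒫`. -/
def StrictConcaveOnP (Φ : (ℝ → ℝ) → ℝ) : Prop :=
  ∀ p q, memP p → memP q → p ≠ q → ∀ t ∈ Ioo (0:ℝ) 1,
    t * Φ p + (1 - t) * Φ q < Φ (fun x => t * p x + (1 - t) * q x)

/-- Partial derivatives of a kernel of three arguments. -/
def qd0 (K : ℝ → ℝ → ℝ → ℝ) (x y0 y1 : ℝ) : ℝ := deriv (fun u => K x u y1) y0
def qd1 (K : ℝ → ℝ → ℝ → ℝ) (x y0 y1 : ℝ) : ℝ := deriv (fun u => K x y0 u) y1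

/-- Partial derivatives of a kernel of four arguments. -/
def pd0 (s : ℝ → ℝ → ℝ → ℝ → ℝ) (x y0 y1 y2 : ℝ) : ℝ := deriv (fun u => s x u y1 y2) y0
def pd1 (s : ℝ → ℝ → ℝ → ℝ → ℝ) (x y0 y1 y2 : ℝ) : ℝ := deriv (fun u => s x y0 u y2) y1
def pd2 (s : ℝ → ℝ → ℝ → ℝ → ℝ) (x y0 y1 y2 : ℝ) : ℝ := deriv (fun u => s x y0 y1 u) y2

/-- Evaluation of a three-argument kernel along the log-likelihood of `p`. -/
def ev1 (K : ℝ → ℝ → ℝ → ℝ) (p : ℝ → ℝ) (x : ℝ) : ℝ := K x (ld p 0 x) (ld p 1 x)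

/-- Evaluation of a four-argument kernel along the log-likelihood of `p`. -/
def ev2 (s : ℝ → ℝ → ℝ → ℝ → ℝ) (p : ℝ → ℝ) (x : ℝ) : ℝ :=
  s x (ld p 0 x) (ld p 1 x) (ld p 2 x)

/-- The functional `Φ_K` for `K ∈ ℛ₁`. -/
def PhiK1 (K : ℝ → ℝ → ℝ → ℝ) (p : ℝ → ℝ) : ℝ := ∫ x, ev1 K p x * p x

/-- The functional `Φ_K` for `K ∈ ℛ₂`. -/
def PhiK2 (s : ℝ → ℝ → ℝ → ℝ → ℝ) (p : ℝ → ℝ) : ℝ := ∫ x, ev2 s p x * p x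

/-- The scoring function built from the kernel `c·y₀ + K₀(x,y₁)` via the tangent
construction. -/
def sFromK0 (c : ℝ) (K0 : ℝ → ℝ → ℝ) (x y0 y1 y2 : ℝ) : ℝ :=
  c * y0 + K0 x y1 - y1 * deriv (K0 x) y1
    - deriv (fun u => deriv (K0 u) y1) x
    - y2 * deriv (deriv (K0 x)) y1

end

namespace Statement0Aux

open MvPolynomial Finsupp

lemma iteratedDeriv_comb {f g : ℝ → ℝ} {n : ℕ} (a b : ℝ)
    (hf : ContDiff ℝ n f) (hg : ContDiff ℝ n g) (x : ℝ) :
    iteratedDeriv n (fun t => a * f t + b * g t) x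
      = a * iteratedDeriv n f x + b * iteratedDeriv n g x := by
  have h1 : (fun t => a * f t + b * g t) = (fun t => a * f t) + (fun t => b * g t) := rfl
  rw [h1, ← iteratedDerivWithin_univ,
    iteratedDerivWithin_add (mem_univ x) uniqueDiffOn_univ
      ((contDiff_const.mul hf).contDiffWithinAt) ((contDiff_const.mul hg).contDiffWithinAt),
    iteratedDerivWithin_const_mul (mem_univ x) uniqueDiffOn_univ _ hf.contDiffWithinAt,
    iteratedDerivWithin_const_mul (mem_univ x) uniqueDiffOn_univ _ hg.contDiffWithinAt,
    iteratedDerivWithin_univ, iteratedDerivWithin_univ]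

lemma hasD {r : ℝ → ℝ} (hr : ContDiff ℝ 4 r) {j : ℕ} (hj : j < 4) (x : ℝ) :
    HasDerivAt (iteratedDeriv j r) (iteratedDeriv (j + 1) r x) x := by
  rw [iteratedDeriv_succ]
  exact ((hr.differentiable_iteratedDeriv j (by exact_mod_cast hj)) x).hasDerivAt

lemma hasD0 {r : ℝ → ℝ} (hr : ContDiff ℝ 4 r) (x : ℝ) :
    HasDerivAt r (iteratedDeriv 1 r x) x := by
  have := hasD hr (j := 0) (by norm_num) x
  simpa [iteratedDeriv_zero] using this

lemma log_hd1 {r : ℝ → ℝ} (hr : ContDiff ℝ 4 r) (hpos : ∀ x, 0 < r x) (x : ℝ) :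
    HasDerivAt (fun t => Real.log (r t)) (iteratedDeriv 1 r x / r x) x := by
  have := (Real.hasDerivAt_log (hpos x).ne').comp x (hasD0 hr x)
  simpa [div_eq_inv_mul, Function.comp_def] using this

lemma log_id1 {r : ℝ → ℝ} (hr : ContDiff ℝ 4 r) (hpos : ∀ x, 0 < r x) :
    iteratedDeriv 1 (fun t => Real.log (r t)) = fun x => iteratedDeriv 1 r x / r x := by
  funext x
  rw [iteratedDeriv_one]
  exact (log_hd1 hr hpos x).deriv

lemma log_id2 {r : ℝ → ℝ} (hr : ContDiff ℝ 4 r) (hpos : ∀ x, 0 < r x) :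
    iteratedDeriv 2 (fun t => Real.log (r t)) = fun x =>
      (iteratedDeriv 2 r x * r x - iteratedDeriv 1 r x * iteratedDeriv 1 r x) / r x ^ 2 := by
  funext x
  have h : iteratedDeriv 2 (fun t => Real.log (r t)) x
      = deriv (fun y => iteratedDeriv 1 r y / r y) x := by
    rw [show (2:ℕ) = 1 + 1 from rfl, iteratedDeriv_succ, log_id1 hr hpos]
  rw [h]
  exact (((hasD hr (j := 1) (by norm_num) x).div (hasD0 hr x) (hpos x).ne')).deriv

lemma log_id3 {r : ℝ → ℝ} (hr : ContDiff ℝ 4 r) (hpos : ∀ x, 0 < r x) :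
    iteratedDeriv 3 (fun t => Real.log (r t)) = fun x =>
      (iteratedDeriv 3 r x * r x ^ 2 - 3 * iteratedDeriv 2 r x * iteratedDeriv 1 r x * r x
        + 2 * iteratedDeriv 1 r x ^ 3) / r x ^ 3 := by
  funext x
  have h : iteratedDeriv 3 (fun t => Real.log (r t)) x
      = deriv (fun y =>
          (iteratedDeriv 2 r y * r y - iteratedDeriv 1 r y * iteratedDeriv 1 r y) / r y ^ 2) x := by
    rw [show (3:ℕ) = 2 + 1 from rfl, iteratedDeriv_succ, log_id2 hr hpos]
  rw [h]
  have h1 := hasD hr (j := 1) (by norm_num) x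
  have h2 := hasD hr (j := 2) (by norm_num) x
  have h0 := hasD0 hr x
  have hnum := (h2.mul h0).sub (h1.mul h1)
  have hden := h0.pow 2
  have hd := hnum.div hden (pow_ne_zero 2 (hpos x).ne')
  erw [hd.deriv]
  simp only [Pi.add_apply, Pi.sub_apply, Pi.mul_apply, Pi.pow_apply]
  have hx := (hpos x).ne'
  field_simp
  ring

lemma log_id4 {r : ℝ → ℝ} (hr : ContDiff ℝ 4 r) (hpos : ∀ x, 0 < r x) :
    iteratedDeriv 4 (fun t => Real.log (r t)) = fun x =>
      (iteratedDeriv 4 r x * r x ^ 3 - 4 * iteratedDeriv 3 r x * iteratedDeriv 1 r x * r x ^ 2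
        - 3 * iteratedDeriv 2 r x ^ 2 * r x ^ 2
        + 12 * iteratedDeriv 2 r x * iteratedDeriv 1 r x ^ 2 * r x
        - 6 * iteratedDeriv 1 r x ^ 4) / r x ^ 4 := by
  funext x
  have h : iteratedDeriv 4 (fun t => Real.log (r t)) x
      = deriv (fun y =>
          (iteratedDeriv 3 r y * r y ^ 2 - 3 * (iteratedDeriv 2 r y * iteratedDeriv 1 r y * r y)
            + 2 * iteratedDeriv 1 r y ^ 3) / r y ^ 3) x := by
    rw [show (4:ℕ) = 3 + 1 from rfl, iteratedDeriv_succ, log_id3 hr hpos]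
    congr 1; funext y; ring
  rw [h]
  have h1 := hasD hr (j := 1) (by norm_num) x
  have h2 := hasD hr (j := 2) (by norm_num) x
  have h3 := hasD hr (j := 3) (by norm_num) x
  have h0 := hasD0 hr x
  have hnum := ((h3.mul (h0.pow 2)).sub (((h2.mul h1).mul h0).const_mul 3)).add
    ((h1.pow 3).const_mul 2)
  have hden := h0.pow 3
  have hd := hnum.div hden (pow_ne_zero 3 (hpos x).ne')
  erw [hd.deriv]
  simp only [Pi.add_apply, Pi.sub_apply, Pi.mul_apply, Pi.pow_apply]
  have hx := (hpos x).ne'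
  field_simp
  ring

lemma rpos {p q : ℝ → ℝ} (hp : memP p) (hq : memP q) {α : ℝ} (hα : α ∈ Set.Icc (0:ℝ) 1) :
    ∀ x, 0 < α * p x + (1 - α) * q x := by
  intro x
  rcases eq_or_lt_of_le hα.1 with h | h
  · simp only [← h]
    simpa using hq.2.1 x
  · have h1 : 0 < α * p x := mul_pos h (hp.2.1 x)
    have h2 : 0 ≤ (1 - α) * q x := mul_nonneg (by linarith [hα.2]) (hq.2.1 x).le
    linarith

lemma comb_bound {p q : ℝ → ℝ} (hp : memP p) (hq : memP q) {α : ℝ}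
    (hα : α ∈ Set.Icc (0:ℝ) 1) {j : ℕ} (hj : j ≤ 4) (x : ℝ) :
    |iteratedDeriv j (fun t => α * p t + (1 - α) * q t) x| ≤
      max (|iteratedDeriv j p x| / p x) (|iteratedDeriv j q x| / q x)
        * (α * p x + (1 - α) * q x) := by
  have hpc : ContDiff ℝ j p := hp.2.2.1.of_le (by exact_mod_cast hj)
  have hqc : ContDiff ℝ j q := hq.2.2.1.of_le (by exact_mod_cast hj)
  rw [iteratedDeriv_comb α (1 - α) hpc hqc x]
  set m := max (|iteratedDeriv j p x| / p x) (|iteratedDeriv j q x| / q x) with hm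
  have hP : |iteratedDeriv j p x| ≤ m * p x :=
    (div_le_iff₀ (hp.2.1 x)).mp (le_max_left _ _)
  have hQ : |iteratedDeriv j q x| ≤ m * q x :=
    (div_le_iff₀ (hq.2.1 x)).mp (le_max_right _ _)
  have hα0 : 0 ≤ α := hα.1
  have hα1 : 0 ≤ 1 - α := by linarith [hα.2]
  have htri : |α * iteratedDeriv j p x + (1 - α) * iteratedDeriv j q x| ≤
      α * |iteratedDeriv j p x| + (1 - α) * |iteratedDeriv j q x| := by
    calc |α * iteratedDeriv j p x + (1 - α) * iteratedDeriv j q x|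
        ≤ |α * iteratedDeriv j p x| + |(1 - α) * iteratedDeriv j q x| := abs_add_le _ _
      _ = α * |iteratedDeriv j p x| + (1 - α) * |iteratedDeriv j q x| := by
          rw [abs_mul, abs_mul, abs_of_nonneg hα0, abs_of_nonneg hα1]
  have h1 := mul_le_mul_of_nonneg_left hP hα0
  have h2 := mul_le_mul_of_nonneg_left hQ hα1
  calc |α * iteratedDeriv j p x + (1 - α) * iteratedDeriv j q x|
      ≤ α * |iteratedDeriv j p x| + (1 - α) * |iteratedDeriv j q x| := htri
    _ ≤ α * (m * p x) + (1 - α) * (m * q x) := by linarith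
    _ = m * (α * p x + (1 - α) * q x) := by ring

lemma u_bound {r : ℝ → ℝ} (hpos : ∀ x, 0 < r x) {x : ℝ} {j : ℕ} {mj : ℝ}
    (h : |iteratedDeriv j r x| ≤ mj * r x) :
    ∃ u : ℝ, iteratedDeriv j r x = u * r x ∧ |u| ≤ mj := by
  refine ⟨iteratedDeriv j r x / r x, (div_mul_cancel₀ _ (hpos x).ne').symm, ?_⟩
  rw [abs_div, abs_of_pos (hpos x), div_le_iff₀ (hpos x)]
  exact h

lemma bound1 {r : ℝ → ℝ} (hr : ContDiff ℝ 4 r) (hpos : ∀ x, 0 < r x) {x : ℝ} {m1 : ℝ}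
    (h1 : |iteratedDeriv 1 r x| ≤ m1 * r x) :
    |iteratedDeriv 1 (fun t => Real.log (r t)) x| ≤ m1 := by
  simp only [log_id1 hr hpos]
  obtain ⟨u1, e1, hu1⟩ := u_bound hpos h1
  rw [e1, mul_div_assoc, div_self (hpos x).ne', mul_one]
  exact hu1

lemma bound2 {r : ℝ → ℝ} (hr : ContDiff ℝ 4 r) (hpos : ∀ x, 0 < r x) {x : ℝ} {m1 m2 : ℝ}
    (h1 : |iteratedDeriv 1 r x| ≤ m1 * r x) (h2 : |iteratedDeriv 2 r x| ≤ m2 * r x) :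
    |iteratedDeriv 2 (fun t => Real.log (r t)) x| ≤ m2 + m1 ^ 2 := by
  simp only [log_id2 hr hpos]
  obtain ⟨u1, e1, hu1⟩ := u_bound hpos h1
  obtain ⟨u2, e2, hu2⟩ := u_bound hpos h2
  rw [e1, e2]
  have he : (u2 * r x * r x - u1 * r x * (u1 * r x)) / r x ^ 2 = u2 - u1 ^ 2 := by
    field_simp [(hpos x).ne']
  rw [he]
  have q2 : |u1 ^ 2| ≤ m1 ^ 2 := by
    rw [abs_pow]; exact pow_le_pow_left₀ (abs_nonneg _) hu1 2
  have a2 := abs_le.mp hu2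
  have a12 := abs_le.mp q2
  rw [abs_le]
  constructor <;> linarith

lemma bound3 {r : ℝ → ℝ} (hr : ContDiff ℝ 4 r) (hpos : ∀ x, 0 < r x) {x : ℝ} {m1 m2 m3 : ℝ}
    (h1 : |iteratedDeriv 1 r x| ≤ m1 * r x) (h2 : |iteratedDeriv 2 r x| ≤ m2 * r x)
    (h3 : |iteratedDeriv 3 r x| ≤ m3 * r x) :
    |iteratedDeriv 3 (fun t => Real.log (r t)) x| ≤ m3 + 3 * (m2 * m1) + 2 * m1 ^ 3 := by
  simp only [log_id3 hr hpos]
  obtain ⟨u1, e1, hu1⟩ := u_bound hpos h1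
  obtain ⟨u2, e2, hu2⟩ := u_bound hpos h2
  obtain ⟨u3, e3, hu3⟩ := u_bound hpos h3
  have hm1 : 0 ≤ m1 := (abs_nonneg _).trans hu1
  have hm2 : 0 ≤ m2 := (abs_nonneg _).trans hu2
  rw [e1, e2, e3]
  have he : (u3 * r x * r x ^ 2 - 3 * (u2 * r x) * (u1 * r x) * r x
        + 2 * (u1 * r x) ^ 3) / r x ^ 3 = u3 - 3 * (u2 * u1) + 2 * u1 ^ 3 := by
    field_simp [(hpos x).ne']
  rw [he]
  have q21 : |u2 * u1| ≤ m2 * m1 := by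
    rw [abs_mul]; exact mul_le_mul hu2 hu1 (abs_nonneg _) hm2
  have q13 : |u1 ^ 3| ≤ m1 ^ 3 := by
    rw [abs_pow]; exact pow_le_pow_left₀ (abs_nonneg _) hu1 3
  have a3 := abs_le.mp hu3
  have a21 := abs_le.mp q21
  have a13 := abs_le.mp q13
  rw [abs_le]
  constructor <;> linarith

lemma bound4 {r : ℝ → ℝ} (hr : ContDiff ℝ 4 r) (hpos : ∀ x, 0 < r x) {x : ℝ}
    {m1 m2 m3 m4 : ℝ}
    (h1 : |iteratedDeriv 1 r x| ≤ m1 * r x) (h2 : |iteratedDeriv 2 r x| ≤ m2 * r x)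
    (h3 : |iteratedDeriv 3 r x| ≤ m3 * r x) (h4 : |iteratedDeriv 4 r x| ≤ m4 * r x) :
    |iteratedDeriv 4 (fun t => Real.log (r t)) x| ≤
      m4 + 4 * (m3 * m1) + 3 * m2 ^ 2 + 12 * (m2 * m1 ^ 2) + 6 * m1 ^ 4 := by
  simp only [log_id4 hr hpos]
  obtain ⟨u1, e1, hu1⟩ := u_bound hpos h1
  obtain ⟨u2, e2, hu2⟩ := u_bound hpos h2
  obtain ⟨u3, e3, hu3⟩ := u_bound hpos h3
  obtain ⟨u4, e4, hu4⟩ := u_bound hpos h4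
  have hm1 : 0 ≤ m1 := (abs_nonneg _).trans hu1
  have hm2 : 0 ≤ m2 := (abs_nonneg _).trans hu2
  have hm3 : 0 ≤ m3 := (abs_nonneg _).trans hu3
  rw [e1, e2, e3, e4]
  have he : (u4 * r x * r x ^ 3 - 4 * (u3 * r x) * (u1 * r x) * r x ^ 2
        - 3 * (u2 * r x) ^ 2 * r x ^ 2 + 12 * (u2 * r x) * (u1 * r x) ^ 2 * r x
        - 6 * (u1 * r x) ^ 4) / r x ^ 4
      = u4 - 4 * (u3 * u1) - 3 * u2 ^ 2 + 12 * (u2 * u1 ^ 2) - 6 * u1 ^ 4 := by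
    field_simp [(hpos x).ne']
  rw [he]
  have q12 : |u1 ^ 2| ≤ m1 ^ 2 := by
    rw [abs_pow]; exact pow_le_pow_left₀ (abs_nonneg _) hu1 2
  have q31 : |u3 * u1| ≤ m3 * m1 := by
    rw [abs_mul]; exact mul_le_mul hu3 hu1 (abs_nonneg _) hm3
  have q22 : |u2 ^ 2| ≤ m2 ^ 2 := by
    rw [abs_pow]; exact pow_le_pow_left₀ (abs_nonneg _) hu2 2
  have q212 : |u2 * u1 ^ 2| ≤ m2 * m1 ^ 2 := by
    rw [abs_mul]
    exact mul_le_mul hu2 q12 (abs_nonneg _) hm2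
  have q14 : |u1 ^ 4| ≤ m1 ^ 4 := by
    rw [abs_pow]; exact pow_le_pow_left₀ (abs_nonneg _) hu1 4
  have a4 := abs_le.mp hu4
  have a31 := abs_le.mp q31
  have a22 := abs_le.mp q22
  have a212 := abs_le.mp q212
  have a14 := abs_le.mp q14
  rw [abs_le]
  constructor <;> linarith

end Statement0Aux

open Statement0Aux MvPolynomial Finsupp in
set_option maxHeartbeats 1000000 in
theorem statement0 (k : ℕ) (hk1 : 1 ≤ k) (hk4 : k ≤ 4) :
    ∃ M : MvPolynomial (Fin k) ℝ,
      M.totalDegree = k ∧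
      (∀ m, 0 ≤ M.coeff m) ∧
      ∀ p q : ℝ → ℝ, memP p → memP q → ∀ α ∈ Set.Icc (0:ℝ) 1, ∀ x : ℝ,
        |iteratedDeriv k (fun t => Real.log (α * p t + (1 - α) * q t)) x| ≤
          MvPolynomial.eval
            (fun i : Fin k =>
              max (|iteratedDeriv ((i : ℕ) + 1) p x| / p x)
                  (|iteratedDeriv ((i : ℕ) + 1) q x| / q x)) M := by
  interval_cases k
  · -- k = 1
    refine ⟨monomial (single 0 1) 1, ?_, ?_, ?_⟩
    · rw [totalDegree_monomial _ (one_ne_zero)]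
      simp
    · intro m
      rw [coeff_monomial]
      split_ifs <;> norm_num
    · intro p q hp hq α hα x
      have hr : ContDiff ℝ 4 (fun t => α * p t + (1 - α) * q t) :=
        (contDiff_const.mul hp.2.2.1).add (contDiff_const.mul hq.2.2.1)
      have hrpos := rpos hp hq hα
      have hb := bound1 hr hrpos (comb_bound hp hq hα (by norm_num) x)
      simpa [eval_monomial] using hb
  · -- k = 2
    refine ⟨monomial (single 1 1) 1 + monomial (single 0 2) 1, ?_, ?_, ?_⟩
    · apply le_antisymm
      · refine (totalDegree_add _ _).trans (max_le ?_ ?_) <;>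
          · rw [totalDegree_monomial _ (one_ne_zero)]; simp
      · have hne : (single (1 : Fin 2) 1) ≠ single 0 2 := by
          intro h; have := DFunLike.congr_fun h 0; simp at this
        have hc : MvPolynomial.coeff (single (0 : Fin 2) 2)
            (monomial (single (1 : Fin 2) 1) (1:ℝ) + monomial (single 0 2) 1) ≠ 0 := by
          rw [MvPolynomial.coeff_add, coeff_monomial, if_neg hne, coeff_monomial, if_pos rfl]
          norm_num
        have := MvPolynomial.le_totalDegree (MvPolynomial.mem_support_iff.mpr hc)
        simpa using this
    · intro m
      rw [MvPolynomial.coeff_add, coeff_monomial, coeff_monomial]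
      split_ifs <;> norm_num
    · intro p q hp hq α hα x
      have hr : ContDiff ℝ 4 (fun t => α * p t + (1 - α) * q t) :=
        (contDiff_const.mul hp.2.2.1).add (contDiff_const.mul hq.2.2.1)
      have hrpos := rpos hp hq hα
      have hb := bound2 hr hrpos (comb_bound hp hq hα (by norm_num) x)
        (comb_bound hp hq hα (by norm_num) x)
      have heval : MvPolynomial.eval
          (fun i : Fin 2 => max (|iteratedDeriv ((i : ℕ) + 1) p x| / p x)
            (|iteratedDeriv ((i : ℕ) + 1) q x| / q x))
          (monomial (single 1 1) (1:ℝ) + monomial (single 0 2) 1)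
          = max (|iteratedDeriv 2 p x| / p x) (|iteratedDeriv 2 q x| / q x)
            + max (|iteratedDeriv 1 p x| / p x) (|iteratedDeriv 1 q x| / q x) ^ 2 := by
        simp [eval_monomial]
      rw [heval]
      exact hb
  · -- k = 3
    refine ⟨monomial (single 2 1) 1 + monomial (single 1 1 + single 0 1) 3
      + monomial (single 0 3) 2, ?_, ?_, ?_⟩
    · apply le_antisymm
      · refine (totalDegree_add _ _).trans (max_le ((totalDegree_add _ _).trans
          (max_le ?_ ?_)) ?_) <;>
          · rw [totalDegree_monomial _ (by norm_num)]
            simp [Finsupp.sum_add_index, Finsupp.sum_single_index]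
      · have hne1 : (single (2 : Fin 3) 1) ≠ single 0 3 := by
          intro h; have := DFunLike.congr_fun h 0; simp at this
        have hne2 : (single (1 : Fin 3) 1 + single 0 1) ≠ single 0 3 := by
          intro h; have := DFunLike.congr_fun h 0; simp at this
        have hc : MvPolynomial.coeff (single (0 : Fin 3) 3)
            (monomial (single (2:Fin 3) 1) (1:ℝ) + monomial (single 1 1 + single 0 1) 3
              + monomial (single 0 3) 2) ≠ 0 := by
          rw [MvPolynomial.coeff_add, MvPolynomial.coeff_add, coeff_monomial, if_neg hne1,
            coeff_monomial, if_neg hne2, coeff_monomial, if_pos rfl]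
          norm_num
        have := MvPolynomial.le_totalDegree (MvPolynomial.mem_support_iff.mpr hc)
        simpa using this
    · intro m
      rw [MvPolynomial.coeff_add, MvPolynomial.coeff_add, coeff_monomial, coeff_monomial,
        coeff_monomial]
      split_ifs <;> norm_num
    · intro p q hp hq α hα x
      have hr : ContDiff ℝ 4 (fun t => α * p t + (1 - α) * q t) :=
        (contDiff_const.mul hp.2.2.1).add (contDiff_const.mul hq.2.2.1)
      have hrpos := rpos hp hq hα
      have hb := bound3 hr hrpos (comb_bound hp hq hα (by norm_num) x)
        (comb_bound hp hq hα (by norm_num) x) (comb_bound hp hq hα (by norm_num) x)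
      have heval : MvPolynomial.eval
          (fun i : Fin 3 => max (|iteratedDeriv ((i : ℕ) + 1) p x| / p x)
            (|iteratedDeriv ((i : ℕ) + 1) q x| / q x))
          (monomial (single 2 1) (1:ℝ) + monomial (single 1 1 + single 0 1) 3
            + monomial (single 0 3) 2)
          = max (|iteratedDeriv 3 p x| / p x) (|iteratedDeriv 3 q x| / q x)
            + 3 * (max (|iteratedDeriv 2 p x| / p x) (|iteratedDeriv 2 q x| / q x)
              * max (|iteratedDeriv 1 p x| / p x) (|iteratedDeriv 1 q x| / q x))
            + 2 * max (|iteratedDeriv 1 p x| / p x) (|iteratedDeriv 1 q x| / q x) ^ 3 := by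
        simp [eval_monomial, Finsupp.prod_add_index, Finsupp.prod_single_index, pow_add,
          show ((3 : Fin 4) : ℕ) = 3 from rfl, show ((2 : Fin 4) : ℕ) = 2 from rfl,
          show ((2 : Fin 3) : ℕ) = 2 from rfl]
        try ring
      rw [heval]
      exact hb
  · -- k = 4
    refine ⟨monomial (single 3 1) 1 + monomial (single 2 1 + single 0 1) 4
      + monomial (single 1 2) 3 + monomial (single 1 1 + single 0 2) 12
      + monomial (single 0 4) 6, ?_, ?_, ?_⟩
    · apply le_antisymm
      · refine (totalDegree_add _ _).trans (max_le ((totalDegree_add _ _).trans (max_le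
          ((totalDegree_add _ _).trans (max_le ((totalDegree_add _ _).trans
          (max_le ?_ ?_)) ?_)) ?_)) ?_) <;>
          · rw [totalDegree_monomial _ (by norm_num)]
            simp [Finsupp.sum_add_index, Finsupp.sum_single_index]
      · have hne1 : (single (3 : Fin 4) 1) ≠ single 0 4 := by
          intro h; have := DFunLike.congr_fun h 0; simp at this
        have hne2 : (single (2 : Fin 4) 1 + single 0 1) ≠ single 0 4 := by
          intro h; have := DFunLike.congr_fun h 0; simp at this
        have hne3 : (single (1 : Fin 4) 2) ≠ single 0 4 := by
          intro h; have := DFunLike.congr_fun h 0; simp at this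
        have hne4 : (single (1 : Fin 4) 1 + single 0 2) ≠ single 0 4 := by
          intro h; have := DFunLike.congr_fun h 0; simp at this
        have hc : MvPolynomial.coeff (single (0 : Fin 4) 4)
            (monomial (single (3:Fin 4) 1) (1:ℝ) + monomial (single 2 1 + single 0 1) 4
              + monomial (single 1 2) 3 + monomial (single 1 1 + single 0 2) 12
              + monomial (single 0 4) 6) ≠ 0 := by
          rw [MvPolynomial.coeff_add, MvPolynomial.coeff_add, MvPolynomial.coeff_add,
            MvPolynomial.coeff_add, coeff_monomial, if_neg hne1, coeff_monomial, if_neg hne2,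
            coeff_monomial, if_neg hne3, coeff_monomial, if_neg hne4, coeff_monomial, if_pos rfl]
          norm_num
        have := MvPolynomial.le_totalDegree (MvPolynomial.mem_support_iff.mpr hc)
        simpa using this
    · intro m
      rw [MvPolynomial.coeff_add, MvPolynomial.coeff_add, MvPolynomial.coeff_add,
        MvPolynomial.coeff_add, coeff_monomial, coeff_monomial, coeff_monomial, coeff_monomial,
        coeff_monomial]
      split_ifs <;> norm_num
    · intro p q hp hq α hα x
      have hr : ContDiff ℝ 4 (fun t => α * p t + (1 - α) * q t) :=
        (contDiff_const.mul hp.2.2.1).add (contDiff_const.mul hq.2.2.1)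
      have hrpos := rpos hp hq hα
      have hb := bound4 hr hrpos (comb_bound hp hq hα (by norm_num) x)
        (comb_bound hp hq hα (by norm_num) x) (comb_bound hp hq hα (by norm_num) x)
        (comb_bound hp hq hα (by norm_num) x)
      have heval : MvPolynomial.eval
          (fun i : Fin 4 => max (|iteratedDeriv ((i : ℕ) + 1) p x| / p x)
            (|iteratedDeriv ((i : ℕ) + 1) q x| / q x))
          (monomial (single 3 1) (1:ℝ) + monomial (single 2 1 + single 0 1) 4
            + monomial (single 1 2) 3 + monomial (single 1 1 + single 0 2) 12
            + monomial (single 0 4) 6)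
          = max (|iteratedDeriv 4 p x| / p x) (|iteratedDeriv 4 q x| / q x)
            + 4 * (max (|iteratedDeriv 3 p x| / p x) (|iteratedDeriv 3 q x| / q x)
              * max (|iteratedDeriv 1 p x| / p x) (|iteratedDeriv 1 q x| / q x))
            + 3 * max (|iteratedDeriv 2 p x| / p x) (|iteratedDeriv 2 q x| / q x) ^ 2
            + 12 * (max (|iteratedDeriv 2 p x| / p x) (|iteratedDeriv 2 q x| / q x)
              * max (|iteratedDeriv 1 p x| / p x) (|iteratedDeriv 1 q x| / q x) ^ 2)
            + 6 * max (|iteratedDeriv 1 p x| / p x) (|iteratedDeriv 1 q x| / q x) ^ 4 := by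
        simp [eval_monomial, Finsupp.prod_add_index, Finsupp.prod_single_index, pow_add,
          show ((3 : Fin 4) : ℕ) = 3 from rfl, show ((2 : Fin 4) : ℕ) = 2 from rfl,
          show ((2 : Fin 3) : ℕ) = 2 from rfl]
        try ring
      rw [heval]
      exact hb
end

section
/- Let c ∈ ℝ and K_0 : ℝ² → ℝ, and define K(x, y_0, y_1) = c·y_0 + K_0(x, y_1). Suppose (i) K ∈ ℛ_1, (ii) c ≤ 0, and (iii) for every x ∈ ℝ the map y_1 ↦ K_0(x, y_1) is concave. Then the functional Φ_K : 𝒫 → ℝ is concave, i.e., Φ_K(t·p + (1−t)·q) ≥ t·Φ_K(p) + (1−t)·Φ_K(q) for all p, q ∈ 𝒫 and t ∈ [0,1]. Moreover, if c < 0, or if c ≤ 0 and y_1 ↦ K_0(x, y_1) is strictly concave for every x, then Φ_K is strictly concave, i.e., the inequality is strict whenever p ≠ q and t ∈ (0,1). -/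
open MeasureTheory Filter Set

section aux

lemma ev_bound {g : ℝ → ℝ} (h : Tendsto g (atTop ⊔ atBot) (nhds 0)) :
    ∃ M : ℝ, 1 ≤ M ∧ ∀ x : ℝ, M ≤ |x| → |g x| ≤ 1 := by
  have h1 : ∀ᶠ x in atTop ⊔ atBot, |g x| < 1 := by
    have := h.abs
    rw [abs_zero] at this
    exact this.eventually_lt_const one_pos
  rw [eventually_sup, eventually_atTop, eventually_atBot] at h1
  obtain ⟨⟨M1, hM1⟩, ⟨M2, hM2⟩⟩ := h1
  refine ⟨max 1 (max |M1| |M2|), le_max_left _ _, fun x hx => ?_⟩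
  rcases le_total 0 x with hx0 | hx0
  · have : M1 ≤ x := by
      rw [abs_of_nonneg hx0] at hx
      calc M1 ≤ |M1| := le_abs_self _
        _ ≤ x := le_trans (le_trans (le_max_left _ _) (le_max_right _ _)) hx
    exact (hM1 x this).le
  · have : x ≤ M2 := by
      rw [abs_of_nonpos hx0] at hx
      have : |M2| ≤ -x := le_trans (le_trans (le_max_right _ _) (le_max_right _ _)) hx
      linarith [neg_abs_le M2]
    exact (hM2 x this).le

lemma compact_bound {g : ℝ → ℝ} (hg : Continuous g) (M : ℝ) :
    ∃ C : ℝ, 0 ≤ C ∧ ∀ x ∈ Icc (-M) M, |g x| ≤ C := by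
  obtain ⟨C, hC⟩ := isCompact_Icc.exists_bound_of_continuousOn (hg.continuousOn (s := Icc (-M) M))
  exact ⟨max C 0, le_max_right _ _, fun x hx => le_trans (hC x hx) (le_max_left _ _)⟩

lemma poly_bound_of_tendsto {g : ℝ → ℝ} (hg : Continuous g) {a : ℝ} (ha : 0 < a)
    (h : Tendsto (fun x => |x| ^ (-a) * g x) (atTop ⊔ atBot) (nhds 0)) :
    ∃ n : ℕ, ∃ A : ℝ, 0 ≤ A ∧ ∀ x, |g x| ≤ A * (1 + |x|) ^ n := by
  obtain ⟨M, hM1, hM⟩ := ev_bound h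
  obtain ⟨C, hC0, hC⟩ := compact_bound hg M
  refine ⟨⌈a⌉₊, max C 1, le_trans hC0 (le_max_left _ _), fun x => ?_⟩
  have h1x : (1:ℝ) ≤ 1 + |x| := by simp [abs_nonneg]
  rcases le_total |x| M with hxm | hxm
  · have : x ∈ Icc (-M) M := by
      constructor <;> [linarith [neg_abs_le x]; linarith [le_abs_self x]]
    calc |g x| ≤ C := hC x this
      _ ≤ max C 1 * 1 := by simp [le_max_left]
      _ ≤ max C 1 * (1 + |x|) ^ ⌈a⌉₊ := by
          have h5 : (1:ℝ) ≤ (1 + |x|) ^ ⌈a⌉₊ := one_le_pow₀ h1x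
          nlinarith [le_max_left C 1, hC0]
  · have hx1 : (1:ℝ) ≤ |x| := le_trans hM1 hxm
    have hxpos : (0:ℝ) < |x| := lt_of_lt_of_le one_pos hx1
    have h2 := hM x hxm
    rw [abs_mul, abs_of_nonneg (Real.rpow_nonneg (abs_nonneg x) _)] at h2
    have h3 : |g x| ≤ |x| ^ a := by
      have hpow : (0:ℝ) < |x| ^ (-a) := Real.rpow_pos_of_pos hxpos _
      have hinv : (|x| ^ (-a))⁻¹ = |x| ^ a := by
        rw [← Real.rpow_neg (abs_nonneg x), neg_neg]
      rw [← hinv]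
      have h3 : |x| ^ (-a) * (|x| ^ (-a))⁻¹ = 1 := mul_inv_cancel₀ (ne_of_gt hpow)
      have h4 : (0:ℝ) < (|x| ^ (-a))⁻¹ := by positivity
      nlinarith
    have h4 : |x| ^ a ≤ (1 + |x|) ^ ⌈a⌉₊ := by
      calc |x| ^ a ≤ |x| ^ (⌈a⌉₊ : ℝ) := Real.rpow_le_rpow_of_exponent_le hx1 (Nat.le_ceil a)
        _ = |x| ^ ⌈a⌉₊ := Real.rpow_natCast _ _
        _ ≤ (1 + |x|) ^ ⌈a⌉₊ := by gcongr; linarith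
    calc |g x| ≤ |x| ^ a := h3
      _ ≤ (1 + |x|) ^ ⌈a⌉₊ := h4
      _ ≤ max C 1 * (1 + |x|) ^ ⌈a⌉₊ := by
          nlinarith [pow_nonneg (by positivity : (0:ℝ) ≤ 1 + |x|) ⌈a⌉₊, le_max_right C 1]

/-- Bundle of analytic estimates sufficient for integrability. -/
def Nice (p : ℝ → ℝ) : Prop :=
  ContDiff ℝ 4 p ∧ (∀ x, 0 < p x) ∧
  ∃ n : ℕ, ∃ A : ℝ, 0 ≤ A ∧
    (∀ x, |Real.log (p x)| ≤ A * (1 + |x|) ^ n) ∧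
    (∀ x, |deriv p x| / p x ≤ A * (1 + |x|) ^ n) ∧
    (∀ m : ℕ, ∃ D : ℝ, ∀ x, (1 + |x|) ^ m * p x ≤ D)

lemma decay_of_memP {p : ℝ → ℝ} (hp : memP p) (m : ℕ) :
    ∃ D : ℝ, ∀ x, (1 + |x|) ^ m * p x ≤ D := by
  obtain ⟨-, hpos, hsm, hP3, -⟩ := hp
  have h0 := hP3 (m + 1) (by positivity) 0 (by norm_num)
  rw [iteratedDeriv_zero] at h0
  obtain ⟨M, hM1, hM⟩ := ev_bound h0
  obtain ⟨C, hC0, hC⟩ := compact_bound hsm.continuous M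
  have h1C : ∀ x ∈ Icc (-M) M, (1 + |x|) ^ m * p x ≤ (1 + M) ^ m * C := by
    intro x hx
    have hxM : |x| ≤ M := abs_le.mpr hx
    have : |p x| = p x := abs_of_pos (hpos x)
    have e1 : (1 + |x|) ^ m ≤ (1 + M) ^ m := by gcongr
    have e2 : p x ≤ C := this ▸ hC x hx
    have : (0:ℝ) ≤ (1 + M) ^ m := by positivity
    exact mul_le_mul e1 e2 (hpos x).le this
  refine ⟨max ((1 + M) ^ m * C) (2 ^ m), fun x => ?_⟩
  rcases le_total |x| M with hxm | hxm
  · refine le_trans (h1C x (abs_le.mp hxm)) (le_max_left _ _)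
  · have hx1 : (1:ℝ) ≤ |x| := le_trans hM1 hxm
    have hxpos : (0:ℝ) < |x| := lt_of_lt_of_le one_pos hx1
    have h2 := hM x hxm
    have hpx : |p x| = p x := abs_of_pos (hpos x)
    rw [abs_mul, hpx, abs_of_nonneg (Real.rpow_nonneg (abs_nonneg x) _)] at h2
    have key : (1 + |x|) ^ m * p x ≤ 2 ^ m := by
      have e1 : (1 + |x|) ^ m ≤ (2 * |x|) ^ m := by gcongr; linarith
      have e2 : (2 * |x|) ^ m = 2 ^ m * |x| ^ m := by rw [mul_pow]
      have e3 : (|x|:ℝ) ^ m ≤ |x| ^ (m + 1) := by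
        calc (|x|:ℝ) ^ m = |x| ^ m * 1 := (mul_one _).symm
          _ ≤ |x| ^ m * |x| := by gcongr
          _ = |x| ^ (m + 1) := by ring
      have e4 : (|x|:ℝ) ^ (m + 1) = |x| ^ ((m:ℝ) + 1) := by
        rw [← Real.rpow_natCast |x| (m + 1)]; push_cast; ring_nf
      have e5 : |x| ^ ((m:ℝ) + 1) * p x ≤ 1 := h2
      have hpnn : 0 ≤ p x := (hpos x).le
      calc (1 + |x|) ^ m * p x ≤ 2 ^ m * |x| ^ m * p x := by
            rw [← e2]; gcongr
        _ ≤ 2 ^ m * (|x| ^ ((m:ℝ) + 1) * p x) := by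
            rw [← e4]; nlinarith [mul_le_mul_of_nonneg_right e3 hpnn,
              pow_pos (by norm_num : (0:ℝ) < 2) m]
        _ ≤ 2 ^ m * 1 := by gcongr
        _ = 2 ^ m := mul_one _
    exact le_trans key (le_max_right _ _)

lemma hasDerivAt_log_comp {p : ℝ → ℝ} (hsm : ContDiff ℝ 4 p) (hpos : ∀ x, 0 < p x) (x : ℝ) :
    HasDerivAt (fun t => Real.log (p t)) (deriv p x / p x) x :=
  ((hsm.differentiable (by norm_num) x).hasDerivAt).log (ne_of_gt (hpos x))

lemma log_poly_bound {p : ℝ → ℝ} (hsm : ContDiff ℝ 4 p) (hpos : ∀ x, 0 < p x)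
    {A : ℝ} {n : ℕ} (hA : 0 ≤ A) (hder : ∀ x, |deriv p x| / p x ≤ A * (1 + |x|) ^ n) :
    ∀ x, |Real.log (p x)| ≤ (A + |Real.log (p 0)|) * (1 + |x|) ^ (n + 1) := by
  intro x
  set L : ℝ → ℝ := fun t => Real.log (p t) with hL
  have hder' : ∀ y, ‖deriv L y‖ = |deriv p y| / p y := by
    intro y
    rw [(hasDerivAt_log_comp hsm hpos y).deriv]
    rw [Real.norm_eq_abs, abs_div, abs_of_pos (hpos y)]
  have hmem : ∀ y ∈ uIcc 0 x, |y| ≤ |x| := by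
    intro y hy
    rw [uIcc_eq_union] at hy
    rcases hy with hy | hy <;> rw [mem_Icc] at hy <;> rw [abs_le] <;>
      constructor <;> [skip; skip; skip; skip] <;>
      [linarith [le_abs_self x]; linarith [le_abs_self x];
       linarith [neg_abs_le x]; linarith [neg_abs_le x]]
  have hbound : ∀ y ∈ uIcc 0 x, ‖deriv L y‖ ≤ A * (1 + |x|) ^ n := by
    intro y hy
    rw [hder' y]
    refine le_trans (hder y) ?_
    have : (1 + |y|) ^ n ≤ (1 + |x|) ^ n :=
      pow_le_pow_left₀ (by positivity) (by linarith [hmem y hy]) n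
    nlinarith
  have hdiff : ∀ y ∈ uIcc 0 x, DifferentiableAt ℝ L y := fun y _ =>
    (hasDerivAt_log_comp hsm hpos y).differentiableAt
  have := Convex.norm_image_sub_le_of_norm_deriv_le hdiff hbound (convex_uIcc 0 x)
    (left_mem_uIcc) (right_mem_uIcc)
  rw [sub_zero, Real.norm_eq_abs, Real.norm_eq_abs] at this
  have h1x : (1:ℝ) ≤ 1 + |x| := by simp [abs_nonneg]
  have e1 : A * (1 + |x|) ^ n * |x| ≤ A * (1 + |x|) ^ (n + 1) := by
    have : (1 + |x|) ^ n * |x| ≤ (1 + |x|) ^ (n + 1) := by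
      rw [pow_succ]
      gcongr
      linarith [abs_nonneg x]
    nlinarith
  have e2 : (1:ℝ) ≤ (1 + |x|) ^ (n + 1) := one_le_pow₀ h1x
  calc |L x| ≤ |L x - L 0| + |L 0| := by
        have := abs_sub_abs_le_abs_sub (L x) (L 0)
        have := abs_add_le (L x - L 0) (L 0)
        simp only [sub_add_cancel] at this
        linarith
    _ ≤ A * (1 + |x|) ^ n * |x| + |L 0| := by linarith [this]
    _ ≤ A * (1 + |x|) ^ (n + 1) + |L 0| * (1 + |x|) ^ (n + 1) := by
        nlinarith [abs_nonneg (L 0)]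
    _ = (A + |L 0|) * (1 + |x|) ^ (n + 1) := by ring

lemma nice_of_memP {p : ℝ → ℝ} (hp : memP p) : Nice p := by
  obtain ⟨hint, hpos, hsm, hP3, a, ha, hP4⟩ := hp
  refine ⟨hsm, hpos, ?_⟩
  have hcont : Continuous (fun x => deriv p x / p x) :=
    (hsm.continuous_deriv (by norm_num)).div hsm.continuous (fun x => ne_of_gt (hpos x))
  have h1 := hP4 1 le_rfl (by norm_num)
  rw [show (fun x => |x| ^ (-a) * (iteratedDeriv 1 p x / p x))
      = (fun x => |x| ^ (-a) * (deriv p x / p x)) by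
    funext x; rw [iteratedDeriv_one]] at h1
  obtain ⟨n, A, hA, hbd⟩ := poly_bound_of_tendsto hcont ha h1
  have hder : ∀ x, |deriv p x| / p x ≤ A * (1 + |x|) ^ n := by
    intro x
    have := hbd x
    rwa [abs_div, abs_of_pos (hpos x)] at this
  have hlog := log_poly_bound hsm hpos hA hder
  refine ⟨n + 1, A + |Real.log (p 0)|, by positivity, hlog, ?_, ?_⟩
  · intro x
    refine le_trans (hder x) ?_
    have h1x : (1:ℝ) ≤ 1 + |x| := by simp [abs_nonneg]
    have e1 : (1 + |x|) ^ n ≤ (1 + |x|) ^ (n + 1) := pow_le_pow_right₀ h1x (by omega)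
    nlinarith [abs_nonneg (Real.log (p 0)), pow_nonneg (by positivity : (0:ℝ) ≤ 1 + |x|) n]
  · exact decay_of_memP ⟨hint, hpos, hsm, hP3, a, ha, hP4⟩

lemma comb_pos {p q : ℝ → ℝ} (hp : ∀ x, 0 < p x) (hq : ∀ x, 0 < q x) {t : ℝ}
    (ht0 : 0 ≤ t) (ht1 : t ≤ 1) (x : ℝ) : 0 < t * p x + (1 - t) * q x := by
  rcases eq_or_lt_of_le ht0 with h | h
  · simp [← h, hq x]
  · have : 0 ≤ (1 - t) * q x := mul_nonneg (by linarith) (hq x).le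
    nlinarith [hp x]

lemma comb_deriv {p q : ℝ → ℝ} (hp : ContDiff ℝ 4 p) (hq : ContDiff ℝ 4 q) (t : ℝ) (x : ℝ) :
    deriv (fun x => t * p x + (1 - t) * q x) x = t * deriv p x + (1 - t) * deriv q x := by
  have h1 := (hp.differentiable (by norm_num) x).hasDerivAt
  have h2 := (hq.differentiable (by norm_num) x).hasDerivAt
  exact ((h1.const_mul t).add (h2.const_mul (1 - t))).deriv

lemma comb_contDiff {p q : ℝ → ℝ} (hp : ContDiff ℝ 4 p) (hq : ContDiff ℝ 4 q) (t : ℝ) :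
    ContDiff ℝ 4 (fun x => t * p x + (1 - t) * q x) :=
  ((contDiff_const.mul hp).add (contDiff_const.mul hq))

lemma nice_comb {p q : ℝ → ℝ} (hp : Nice p) (hq : Nice q) {t : ℝ}
    (ht0 : 0 ≤ t) (ht1 : t ≤ 1) : Nice (fun x => t * p x + (1 - t) * q x) := by
  obtain ⟨hpsm, hppos, np, Ap, hAp, hplog, hpder, hpdec⟩ := hp
  obtain ⟨hqsm, hqpos, nq, Aq, hAq, hqlog, hqder, hqdec⟩ := hq
  set r : ℝ → ℝ := fun x => t * p x + (1 - t) * q x with hr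
  have hrpos : ∀ x, 0 < r x := comb_pos hppos hqpos ht0 ht1
  have hrx : ∀ x, r x = t * p x + (1 - t) * q x := fun _ => rfl
  clear_value r
  refine ⟨hr ▸ comb_contDiff hpsm hqsm t, hrpos, max np nq, Ap + Aq, by linarith, ?_, ?_, ?_⟩
  · -- log bound
    intro x
    have h1x : (1:ℝ) ≤ 1 + |x| := by simp [abs_nonneg]
    have hmono : ∀ k : ℕ, k ≤ max np nq → (1 + |x|) ^ k ≤ (1 + |x|) ^ (max np nq) :=
      fun k hk => pow_le_pow_right₀ h1x hk
    have hbp : |Real.log (p x)| ≤ Ap * (1 + |x|) ^ (max np nq) :=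
      le_trans (hplog x) (by nlinarith [hmono np (le_max_left np nq)])
    have hbq : |Real.log (q x)| ≤ Aq * (1 + |x|) ^ (max np nq) :=
      le_trans (hqlog x) (by nlinarith [hmono nq (le_max_right np nq)])
    have hub : Real.log (r x) ≤ |Real.log (p x)| + |Real.log (q x)| := by
      have hrle : r x ≤ max (p x) (q x) := by
        rcases le_total (p x) (q x) with h | h <;> simp only [max_eq_right h, max_eq_left h] <;>
          nlinarith [hrx x]
      have := Real.log_le_log (hrpos x) hrle
      rcases le_total (p x) (q x) with h | h
      · rw [max_eq_right h] at this
        linarith [le_abs_self (Real.log (q x)), abs_nonneg (Real.log (p x))]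
      · rw [max_eq_left h] at this
        linarith [le_abs_self (Real.log (p x)), abs_nonneg (Real.log (q x))]
    have hlb : -(|Real.log (p x)| + |Real.log (q x)|) ≤ Real.log (r x) := by
      have hrge : min (p x) (q x) ≤ r x := by
        rcases le_total (p x) (q x) with h | h <;> simp only [min_eq_left h, min_eq_right h] <;>
          nlinarith [hrx x]
      have hminpos : 0 < min (p x) (q x) := lt_min (hppos x) (hqpos x)
      have := Real.log_le_log hminpos hrge
      rcases le_total (p x) (q x) with h | h
      · rw [min_eq_left h] at this
        linarith [neg_abs_le (Real.log (p x)), abs_nonneg (Real.log (q x))]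
      · rw [min_eq_right h] at this
        linarith [neg_abs_le (Real.log (q x)), abs_nonneg (Real.log (p x))]
    rw [abs_le]
    constructor <;> nlinarith
  · -- derivative ratio bound
    intro x
    have h1x : (1:ℝ) ≤ 1 + |x| := by simp [abs_nonneg]
    have hmono : ∀ k : ℕ, k ≤ max np nq → (1 + |x|) ^ k ≤ (1 + |x|) ^ (max np nq) :=
      fun k hk => pow_le_pow_right₀ h1x hk
    have hdr : deriv r x = t * deriv p x + (1 - t) * deriv q x := hr ▸ comb_deriv hpsm hqsm t x
    have key : |deriv r x| ≤ (|deriv p x| / p x) * r x + (|deriv q x| / q x) * r x := by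
      have e1 : |deriv r x| ≤ t * |deriv p x| + (1 - t) * |deriv q x| := by
        rw [hdr]
        refine le_trans (abs_add_le _ _) ?_
        rw [abs_mul, abs_mul, abs_of_nonneg ht0, abs_of_nonneg (by linarith : (0:ℝ) ≤ 1 - t)]
      have e2 : t * |deriv p x| ≤ (|deriv p x| / p x) * r x := by
        have : t * p x ≤ r x := by nlinarith [hrx x, mul_nonneg (by linarith : (0:ℝ) ≤ 1 - t) (hqpos x).le]
        have hpx := hppos x
        rw [div_mul_eq_mul_div, le_div_iff₀ hpx]
        nlinarith [abs_nonneg (deriv p x)]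
      have e3 : (1 - t) * |deriv q x| ≤ (|deriv q x| / q x) * r x := by
        have : (1 - t) * q x ≤ r x := by nlinarith [hrx x, mul_nonneg ht0 (hppos x).le]
        have hqx := hqpos x
        rw [div_mul_eq_mul_div, le_div_iff₀ hqx]
        nlinarith [abs_nonneg (deriv q x)]
      linarith
    rw [div_le_iff₀ (hrpos x)]
    have hb1 : |deriv p x| / p x ≤ Ap * (1 + |x|) ^ (max np nq) :=
      le_trans (hpder x) (by nlinarith [hmono np (le_max_left np nq)])
    have hb2 : |deriv q x| / q x ≤ Aq * (1 + |x|) ^ (max np nq) :=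
      le_trans (hqder x) (by nlinarith [hmono nq (le_max_right np nq)])
    nlinarith [mul_le_mul_of_nonneg_right hb1 (hrpos x).le,
      mul_le_mul_of_nonneg_right hb2 (hrpos x).le, key]
  · -- decay
    intro m
    obtain ⟨Dp, hDp⟩ := hpdec m
    obtain ⟨Dq, hDq⟩ := hqdec m
    refine ⟨Dp + Dq, fun x => ?_⟩
    have h1 := hDp x
    have h2 := hDq x
    have hps := hppos x
    have hqs := hqpos x
    have hpw : (0:ℝ) ≤ (1 + |x|) ^ m := by positivity
    have : r x ≤ p x + q x := by nlinarith [hrx x]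
    nlinarith [mul_le_mul_of_nonneg_left this hpw]

lemma ld0_eq (p : ℝ → ℝ) (x : ℝ) : ld p 0 x = Real.log (p x) := by
  rw [ld, iteratedDeriv_zero]

lemma ld1_eq {p : ℝ → ℝ} (hsm : ContDiff ℝ 4 p) (hpos : ∀ x, 0 < p x) (x : ℝ) :
    ld p 1 x = deriv p x / p x := by
  rw [ld, iteratedDeriv_one]
  exact (hasDerivAt_log_comp hsm hpos x).deriv

lemma ev1_eq {K : ℝ → ℝ → ℝ → ℝ} {p : ℝ → ℝ} (hsm : ContDiff ℝ 4 p) (hpos : ∀ x, 0 < p x)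
    (x : ℝ) : ev1 K p x = K x (Real.log (p x)) (deriv p x / p x) := by
  rw [ev1, ld0_eq, ld1_eq hsm hpos]

lemma cont_f {K : ℝ → ℝ → ℝ → ℝ} (hK : memR1 K) {p : ℝ → ℝ} (hsm : ContDiff ℝ 4 p)
    (hpos : ∀ x, 0 < p x) : Continuous (fun x => ev1 K p x * p x) := by
  have h1 : Continuous (fun x => Real.log (p x)) :=
    Continuous.log hsm.continuous (fun x => ne_of_gt (hpos x))
  have h2 : Continuous (fun x => deriv p x / p x) :=
    (hsm.continuous_deriv (by norm_num)).div hsm.continuous (fun x => ne_of_gt (hpos x))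
  have h3 : Continuous (fun x : ℝ => uncurry3 K (x, Real.log (p x), deriv p x / p x)) :=
    hK.1.continuous.comp (continuous_id.prodMk (h1.prodMk h2))
  have : (fun x => ev1 K p x * p x)
      = fun x => uncurry3 K (x, Real.log (p x), deriv p x / p x) * p x := by
    funext x; rw [ev1_eq hsm hpos]; rfl
  rw [this]
  exact h3.mul hsm.continuous

lemma integrable_f {K : ℝ → ℝ → ℝ → ℝ} (hK : memR1 K) {p : ℝ → ℝ} (hp : Nice p) :
    Integrable (fun x => ev1 K p x * p x) := by
  obtain ⟨hsm, hpos, n, A, hA, hlog, hder, hdec⟩ := hp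
  obtain ⟨hKc, C, r, hC, hr, hb⟩ := hK
  set N : ℕ := ⌈r⌉₊ with hN
  obtain ⟨D, hD⟩ := hdec ((2 * n + 1) * N + 2)
  have hD0 : 0 ≤ D := le_trans (mul_nonneg (by positivity) (hpos 0).le) (hD 0)
  refine Integrable.mono' ((integrable_inv_one_add_sq.const_mul (C * (1 + A) ^ (2 * N) * D)))
    (cont_f ⟨hKc, C, r, hC, hr, hb⟩ hsm hpos).aestronglyMeasurable
    (Filter.Eventually.of_forall fun x => ?_)
  have h1x : (1:ℝ) ≤ 1 + |x| := by simp [abs_nonneg]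
  set y0 := Real.log (p x)
  set y1 := deriv p x / p x
  have hy1 : |y1| = |deriv p x| / p x := by
    rw [abs_div, abs_of_pos (hpos x)]
  -- bound on |ev1|
  have e0 : |ev1 K p x| ≤ C * ((1 + |x|) * (1 + |y0|) * (1 + |y1|)) ^ r := by
    have := hb 0 (by norm_num) x y0 y1
    rw [norm_iteratedFDeriv_zero] at this
    rw [ev1_eq hsm hpos]
    exact this
  have hbase1 : (1:ℝ) ≤ (1 + |x|) * (1 + |y0|) * (1 + |y1|) := by
    have hb0 : (1:ℝ) ≤ 1 + |y0| := by simp [abs_nonneg]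
    have hb1 : (1:ℝ) ≤ 1 + |y1| := by simp [abs_nonneg]
    have hab : (1:ℝ) ≤ (1 + |x|) * (1 + |y0|) := by nlinarith
    nlinarith
  have e1 : ((1 + |x|) * (1 + |y0|) * (1 + |y1|)) ^ r
      ≤ ((1 + |x|) * (1 + |y0|) * (1 + |y1|)) ^ N := by
    rw [← Real.rpow_natCast _ N]
    exact Real.rpow_le_rpow_of_exponent_le hbase1 (Nat.le_ceil r)
  have hy0b : 1 + |y0| ≤ (1 + A) * (1 + |x|) ^ n := by
    have := hlog x
    have h2 : (1:ℝ) ≤ (1 + |x|) ^ n := one_le_pow₀ h1x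
    nlinarith
  have hy1b : 1 + |y1| ≤ (1 + A) * (1 + |x|) ^ n := by
    have := hder x
    rw [← hy1] at this
    have h2 : (1:ℝ) ≤ (1 + |x|) ^ n := one_le_pow₀ h1x
    nlinarith
  have e2 : (1 + |x|) * (1 + |y0|) * (1 + |y1|) ≤ (1 + A) ^ 2 * (1 + |x|) ^ (2 * n + 1) := by
    calc (1 + |x|) * (1 + |y0|) * (1 + |y1|)
        ≤ (1 + |x|) * ((1 + A) * (1 + |x|) ^ n) * ((1 + A) * (1 + |x|) ^ n) := by
          have hx0 : (0:ℝ) ≤ 1 + |x| := by positivity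
          have hp0 : (0:ℝ) ≤ 1 + |y0| := by positivity
          have hp1 : (0:ℝ) ≤ 1 + |y1| := by positivity
          exact mul_le_mul (mul_le_mul le_rfl hy0b hp0 hx0) hy1b hp1
            (by nlinarith [pow_nonneg (by positivity : (0:ℝ) ≤ 1+|x|) n])
      _ = (1 + A) ^ 2 * ((1 + |x|) * ((1 + |x|) ^ n * (1 + |x|) ^ n)) := by ring
      _ = (1 + A) ^ 2 * (1 + |x|) ^ (2 * n + 1) := by
          rw [← pow_add, ← pow_succ']
          ring_nf
  have e3 : ((1 + |x|) * (1 + |y0|) * (1 + |y1|)) ^ N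
      ≤ ((1 + A) ^ 2 * (1 + |x|) ^ (2 * n + 1)) ^ N :=
    pow_le_pow_left₀ (by positivity) e2 N
  have e4 : ((1 + A) ^ 2 * (1 + |x|) ^ (2 * n + 1)) ^ N
      = (1 + A) ^ (2 * N) * (1 + |x|) ^ ((2 * n + 1) * N) := by
    rw [mul_pow, ← pow_mul, ← pow_mul]
  have e5 : (1 + |x|) ^ ((2 * n + 1) * N) * p x ≤ D * ((1 + |x|) ^ 2)⁻¹ := by
    have h6 := hD x
    have h7 : (1 + |x|) ^ ((2 * n + 1) * N + 2) = (1 + |x|) ^ ((2 * n + 1) * N) * (1 + |x|) ^ 2 := by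
      rw [← pow_add]
    rw [h7] at h6
    have h8 : (0:ℝ) < (1 + |x|) ^ 2 := by positivity
    rw [← div_eq_mul_inv, le_div_iff₀ h8]
    nlinarith [h6]
  have e6 : ((1 + |x|) ^ 2)⁻¹ ≤ (1 + x ^ 2)⁻¹ := by
    have h9 : 1 + x ^ 2 ≤ (1 + |x|) ^ 2 := by nlinarith [abs_nonneg x, sq_abs x]
    exact inv_anti₀ (by positivity) h9
  -- combine
  have hnorm : ‖ev1 K p x * p x‖ = |ev1 K p x| * p x := by
    rw [Real.norm_eq_abs, abs_mul, abs_of_pos (hpos x)]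
  rw [hnorm]
  calc |ev1 K p x| * p x
      ≤ (C * ((1 + A) ^ (2 * N) * (1 + |x|) ^ ((2 * n + 1) * N))) * p x := by
        have := le_trans e0 (by nlinarith [le_trans e1 (le_trans e3 (le_of_eq e4))] :
          C * ((1 + |x|) * (1 + |y0|) * (1 + |y1|)) ^ r
            ≤ C * ((1 + A) ^ (2 * N) * (1 + |x|) ^ ((2 * n + 1) * N)))
        exact mul_le_mul_of_nonneg_right this (hpos x).le
    _ = (C * (1 + A) ^ (2 * N)) * ((1 + |x|) ^ ((2 * n + 1) * N) * p x) := by ring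
    _ ≤ (C * (1 + A) ^ (2 * N)) * (D * ((1 + |x|) ^ 2)⁻¹) := by
        have h10 : (0:ℝ) ≤ C * (1 + A) ^ (2 * N) := by positivity
        exact mul_le_mul_of_nonneg_left e5 h10
    _ ≤ (C * (1 + A) ^ (2 * N)) * (D * (1 + x ^ 2)⁻¹) := by
        have h10 : (0:ℝ) ≤ C * (1 + A) ^ (2 * N) := by positivity
        exact mul_le_mul_of_nonneg_left (mul_le_mul_of_nonneg_left e6 hD0) h10
    _ = C * (1 + A) ^ (2 * N) * D * (1 + x ^ 2)⁻¹ := by ring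

section pointwise
variable {c : ℝ} {K0 : ℝ → ℝ → ℝ}

lemma ev1_eq' {p : ℝ → ℝ} (hsm : ContDiff ℝ 4 p) (hpos : ∀ x, 0 < p x) (x : ℝ) :
    ev1 (fun x y0 y1 => c * y0 + K0 x y1) p x
      = c * Real.log (p x) + K0 x (deriv p x / p x) := by
  rw [ev1_eq hsm hpos]

lemma pointwise_le (hc : c ≤ 0) (hconc : ∀ x : ℝ, ConcaveOn ℝ Set.univ (K0 x))
    {p q : ℝ → ℝ} (hpsm : ContDiff ℝ 4 p) (hppos : ∀ x, 0 < p x)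
    (hqsm : ContDiff ℝ 4 q) (hqpos : ∀ x, 0 < q x)
    {t : ℝ} (ht0 : 0 ≤ t) (ht1 : t ≤ 1) (x : ℝ) :
    t * (ev1 (fun x y0 y1 => c * y0 + K0 x y1) p x * p x)
      + (1 - t) * (ev1 (fun x y0 y1 => c * y0 + K0 x y1) q x * q x)
      ≤ ev1 (fun x y0 y1 => c * y0 + K0 x y1) (fun x => t * p x + (1 - t) * q x) x
          * (t * p x + (1 - t) * q x) := by
  have hrsm : ContDiff ℝ 4 (fun x => t * p x + (1 - t) * q x) := comb_contDiff hpsm hqsm t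
  have hrpos : ∀ y, 0 < t * p y + (1 - t) * q y := comb_pos hppos hqpos ht0 ht1
  have hdr : deriv (fun x => t * p x + (1 - t) * q x) x
      = t * deriv p x + (1 - t) * deriv q x := comb_deriv hpsm hqsm t x
  rw [ev1_eq' hpsm hppos, ev1_eq' hqsm hqpos, ev1_eq' hrsm hrpos, hdr]
  have hp0 : p x ≠ 0 := ne_of_gt (hppos x)
  have hq0 : q x ≠ 0 := ne_of_gt (hqpos x)
  have hRpos : 0 < t * p x + (1 - t) * q x := hrpos x
  have hR0 : t * p x + (1 - t) * q x ≠ 0 := ne_of_gt hRpos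
  -- part 1 : mul log
  have hml := Real.convexOn_mul_log.2 (Set.mem_Ici.mpr (hppos x).le)
    (Set.mem_Ici.mpr (hqpos x).le) ht0 (by linarith : (0:ℝ) ≤ 1 - t)
    (by ring : t + (1 - t) = 1)
  simp only [smul_eq_mul] at hml
  have hml' : c * (t * (p x * Real.log (p x)) + (1 - t) * (q x * Real.log (q x)))
      ≤ c * ((t * p x + (1 - t) * q x) * Real.log (t * p x + (1 - t) * q x)) :=
    mul_le_mul_of_nonpos_left hml hc
  -- part 2 : K0 concavity
  have ha : 0 ≤ t * p x / (t * p x + (1 - t) * q x) :=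
    div_nonneg (mul_nonneg ht0 (hppos x).le) hRpos.le
  have hb : 0 ≤ (1 - t) * q x / (t * p x + (1 - t) * q x) :=
    div_nonneg (mul_nonneg (by linarith) (hqpos x).le) hRpos.le
  have hab : t * p x / (t * p x + (1 - t) * q x)
      + (1 - t) * q x / (t * p x + (1 - t) * q x) = 1 := by
    rw [← add_div, div_self hR0]
  have hK0 := (hconc x).2 (Set.mem_univ (deriv p x / p x)) (Set.mem_univ (deriv q x / q x))
    ha hb hab
  simp only [smul_eq_mul] at hK0
  have hcomb : t * p x / (t * p x + (1 - t) * q x) * (deriv p x / p x)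
      + (1 - t) * q x / (t * p x + (1 - t) * q x) * (deriv q x / q x)
      = (t * deriv p x + (1 - t) * deriv q x) / (t * p x + (1 - t) * q x) := by
    field_simp
  rw [hcomb] at hK0
  have hK0' : t * p x * K0 x (deriv p x / p x) + (1 - t) * q x * K0 x (deriv q x / q x)
      ≤ (t * p x + (1 - t) * q x)
        * K0 x ((t * deriv p x + (1 - t) * deriv q x) / (t * p x + (1 - t) * q x)) := by
    have h2 := mul_le_mul_of_nonneg_left hK0 hRpos.le
    have e : (t * p x + (1 - t) * q x)
        * (t * p x / (t * p x + (1 - t) * q x) * K0 x (deriv p x / p x)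
          + (1 - t) * q x / (t * p x + (1 - t) * q x) * K0 x (deriv q x / q x))
        = t * p x * K0 x (deriv p x / p x) + (1 - t) * q x * K0 x (deriv q x / q x) := by
      field_simp
    linarith [e ▸ h2]
  nlinarith [hml', hK0']

lemma pointwise_lt (hc : c ≤ 0) (hconc : ∀ x : ℝ, ConcaveOn ℝ Set.univ (K0 x))
    {p q : ℝ → ℝ} (hpsm : ContDiff ℝ 4 p) (hppos : ∀ x, 0 < p x)
    (hqsm : ContDiff ℝ 4 q) (hqpos : ∀ x, 0 < q x)
    {t : ℝ} (ht0 : 0 < t) (ht1 : t < 1) (x : ℝ)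
    (hstrict : (c < 0 ∧ p x ≠ q x) ∨
      (StrictConcaveOn ℝ Set.univ (K0 x) ∧ deriv p x / p x ≠ deriv q x / q x)) :
    t * (ev1 (fun x y0 y1 => c * y0 + K0 x y1) p x * p x)
      + (1 - t) * (ev1 (fun x y0 y1 => c * y0 + K0 x y1) q x * q x)
      < ev1 (fun x y0 y1 => c * y0 + K0 x y1) (fun x => t * p x + (1 - t) * q x) x
          * (t * p x + (1 - t) * q x) := by
  have hrsm : ContDiff ℝ 4 (fun x => t * p x + (1 - t) * q x) := comb_contDiff hpsm hqsm t
  have hrpos : ∀ y, 0 < t * p y + (1 - t) * q y := comb_pos hppos hqpos ht0.le ht1.le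
  have hdr : deriv (fun x => t * p x + (1 - t) * q x) x
      = t * deriv p x + (1 - t) * deriv q x := comb_deriv hpsm hqsm t x
  rw [ev1_eq' hpsm hppos, ev1_eq' hqsm hqpos, ev1_eq' hrsm hrpos, hdr]
  have hp0 : p x ≠ 0 := ne_of_gt (hppos x)
  have hq0 : q x ≠ 0 := ne_of_gt (hqpos x)
  have hRpos : 0 < t * p x + (1 - t) * q x := hrpos x
  have hR0 : t * p x + (1 - t) * q x ≠ 0 := ne_of_gt hRpos
  -- weak versions of both parts
  have hml := Real.convexOn_mul_log.2 (Set.mem_Ici.mpr (hppos x).le)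
    (Set.mem_Ici.mpr (hqpos x).le) ht0.le (by linarith : (0:ℝ) ≤ 1 - t)
    (by ring : t + (1 - t) = 1)
  simp only [smul_eq_mul] at hml
  have ha : 0 < t * p x / (t * p x + (1 - t) * q x) :=
    div_pos (mul_pos ht0 (hppos x)) hRpos
  have hb : 0 < (1 - t) * q x / (t * p x + (1 - t) * q x) :=
    div_pos (mul_pos (by linarith) (hqpos x)) hRpos
  have hab : t * p x / (t * p x + (1 - t) * q x)
      + (1 - t) * q x / (t * p x + (1 - t) * q x) = 1 := by
    rw [← add_div, div_self hR0]
  have hcomb : t * p x / (t * p x + (1 - t) * q x) * (deriv p x / p x)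
      + (1 - t) * q x / (t * p x + (1 - t) * q x) * (deriv q x / q x)
      = (t * deriv p x + (1 - t) * deriv q x) / (t * p x + (1 - t) * q x) := by
    field_simp
  have hK0w := (hconc x).2 (Set.mem_univ (deriv p x / p x)) (Set.mem_univ (deriv q x / q x))
    ha.le hb.le hab
  simp only [smul_eq_mul] at hK0w
  rw [hcomb] at hK0w
  have e : (t * p x + (1 - t) * q x)
      * (t * p x / (t * p x + (1 - t) * q x) * K0 x (deriv p x / p x)
        + (1 - t) * q x / (t * p x + (1 - t) * q x) * K0 x (deriv q x / q x))
      = t * p x * K0 x (deriv p x / p x) + (1 - t) * q x * K0 x (deriv q x / q x) := by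
    field_simp
  rcases hstrict with ⟨hcneg, hne⟩ | ⟨hsc, hne⟩
  · -- strict from the mul_log part
    have hmls := Real.strictConvexOn_mul_log.2 (Set.mem_Ici.mpr (hppos x).le)
      (Set.mem_Ici.mpr (hqpos x).le) hne ht0 (by linarith : (0:ℝ) < 1 - t)
      (by ring : t + (1 - t) = 1)
    simp only [smul_eq_mul] at hmls
    have hml' : c * (t * (p x * Real.log (p x)) + (1 - t) * (q x * Real.log (q x)))
        < c * ((t * p x + (1 - t) * q x) * Real.log (t * p x + (1 - t) * q x)) := by
      exact mul_lt_mul_of_neg_left hmls hcneg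
    have hK0' : t * p x * K0 x (deriv p x / p x) + (1 - t) * q x * K0 x (deriv q x / q x)
        ≤ (t * p x + (1 - t) * q x)
          * K0 x ((t * deriv p x + (1 - t) * deriv q x) / (t * p x + (1 - t) * q x)) := by
      have h2 := mul_le_mul_of_nonneg_left hK0w hRpos.le
      linarith [e ▸ h2]
    nlinarith [hml', hK0']
  · -- strict from K0
    have hK0s := hsc.2 (Set.mem_univ (deriv p x / p x)) (Set.mem_univ (deriv q x / q x))
      hne ha hb hab
    simp only [smul_eq_mul] at hK0s
    rw [hcomb] at hK0s
    have hK0' : t * p x * K0 x (deriv p x / p x) + (1 - t) * q x * K0 x (deriv q x / q x)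
        < (t * p x + (1 - t) * q x)
          * K0 x ((t * deriv p x + (1 - t) * deriv q x) / (t * p x + (1 - t) * q x)) := by
      have h2 := mul_lt_mul_of_pos_left hK0s hRpos
      linarith [e ▸ h2]
    have hml' : c * (t * (p x * Real.log (p x)) + (1 - t) * (q x * Real.log (q x)))
        ≤ c * ((t * p x + (1 - t) * q x) * Real.log (t * p x + (1 - t) * q x)) :=
      mul_le_mul_of_nonpos_left hml hc
    nlinarith [hml', hK0']

end pointwise

lemma integral_lt_of_le_of_lt {f g : ℝ → ℝ} (hf : Integrable f) (hg : Integrable g)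
    (hcf : Continuous f) (hcg : Continuous g) (hle : ∀ x, f x ≤ g x) {x0 : ℝ}
    (hlt : f x0 < g x0) : (∫ x, f x) < ∫ x, g x := by
  have hd : Integrable (fun x => g x - f x) := hg.sub hf
  have hpos : 0 < ∫ x, (g x - f x) := by
    rw [integral_pos_iff_support_of_nonneg (fun x => sub_nonneg.mpr (hle x)) hd]
    have hU : IsOpen ((fun x => g x - f x) ⁻¹' Ioi 0) :=
      (isOpen_Ioi).preimage (hcg.sub hcf)
    have hx0 : x0 ∈ (fun x => g x - f x) ⁻¹' Ioi 0 := by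
      simp only [mem_preimage, mem_Ioi]; linarith
    refine lt_of_lt_of_le (hU.measure_pos volume ⟨x0, hx0⟩) (measure_mono ?_)
    intro x hx
    simp only [mem_preimage, mem_Ioi] at hx
    exact ne_of_gt hx
  rw [integral_sub hg hf] at hpos
  linarith

lemma exists_slope_ne {p q : ℝ → ℝ} (hp : memP p) (hq : memP q) (hne : p ≠ q) :
    ∃ x, deriv p x / p x ≠ deriv q x / q x := by
  by_contra h
  push_neg at h
  obtain ⟨hp1, hppos, hpsm, -, -⟩ := hp
  obtain ⟨hq1, hqpos, hqsm, -, -⟩ := hq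
  have hqint : Integrable q := by
    by_contra hc
    rw [integral_undef hc] at hq1; norm_num at hq1
  set g : ℝ → ℝ := fun x => Real.log (p x) - Real.log (q x) with hg
  have hdg : ∀ x, HasDerivAt g (deriv p x / p x - deriv q x / q x) x := fun x =>
    (hasDerivAt_log_comp hpsm hppos x).sub (hasDerivAt_log_comp hqsm hqpos x)
  have hgd : Differentiable ℝ g := fun x => (hdg x).differentiableAt
  have hg0 : ∀ x, deriv g x = 0 := fun x => by rw [(hdg x).deriv, h x, sub_self]
  have hconst : ∀ x, g x = g 0 := fun x => is_const_of_deriv_eq_zero hgd hg0 x 0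
  have hpq : ∀ x, p x = Real.exp (g 0) * q x := by
    intro x
    have h1 : Real.log (p x) = g 0 + Real.log (q x) := by
      have := hconst x
      simp only [hg] at this ⊢
      linarith
    calc p x = Real.exp (Real.log (p x)) := (Real.exp_log (hppos x)).symm
      _ = Real.exp (g 0 + Real.log (q x)) := by rw [h1]
      _ = Real.exp (g 0) * Real.exp (Real.log (q x)) := Real.exp_add _ _
      _ = Real.exp (g 0) * q x := by rw [Real.exp_log (hqpos x)]
  have hint : (∫ x, p x) = Real.exp (g 0) * ∫ x, q x := by
    rw [show (fun x => p x) = fun x => Real.exp (g 0) * q x from funext hpq]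
    exact MeasureTheory.integral_const_mul _ _
  rw [hp1, hq1, mul_one] at hint
  have hg00 : g 0 = 0 := Real.exp_injective (by rw [Real.exp_zero]; exact hint.symm)
  apply hne
  funext x
  rw [hpq x, hg00, Real.exp_zero, one_mul]


end aux

theorem statement5 (c : ℝ) (K0 : ℝ → ℝ → ℝ)
    (hK : memR1 (fun x y0 y1 => c * y0 + K0 x y1))
    (hc : c ≤ 0)
    (hconc : ∀ x : ℝ, ConcaveOn ℝ Set.univ (K0 x)) :
    ConcaveOnP (PhiK1 (fun x y0 y1 => c * y0 + K0 x y1)) ∧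
    ((c < 0 ∨ ∀ x : ℝ, StrictConcaveOn ℝ Set.univ (K0 x)) →
      StrictConcaveOnP (PhiK1 (fun x y0 y1 => c * y0 + K0 x y1))) := by
  set K : ℝ → ℝ → ℝ → ℝ := fun x y0 y1 => c * y0 + K0 x y1 with hKdef
  constructor
  · intro p q hp hq t ht
    obtain ⟨ht0, ht1⟩ := ht
    have hNp := nice_of_memP hp
    have hNq := nice_of_memP hq
    have hNr := nice_comb hNp hNq ht0 ht1
    have h1 := integrable_f hK hNp
    have h2 := integrable_f hK hNq
    have h3 := integrable_f hK hNr
    simp only [PhiK1]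
    have key : (∫ x, (t * (ev1 K p x * p x) + (1 - t) * (ev1 K q x * q x)))
        ≤ ∫ x, ev1 K (fun x => t * p x + (1 - t) * q x) x * (t * p x + (1 - t) * q x) := by
      refine integral_mono ((h1.const_mul t).add (h2.const_mul (1 - t))) h3 fun x => ?_
      exact pointwise_le hc hconc hp.2.2.1 hp.2.1 hq.2.2.1 hq.2.1 ht0 ht1 x
    rwa [integral_add (h1.const_mul t) (h2.const_mul (1 - t)), MeasureTheory.integral_const_mul,
      MeasureTheory.integral_const_mul] at key
  · intro hdisj p q hp hq hpq t ht
    obtain ⟨ht0, ht1⟩ := ht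
    have hNp := nice_of_memP hp
    have hNq := nice_of_memP hq
    have hNr := nice_comb hNp hNq ht0.le ht1.le
    have h1 := integrable_f hK hNp
    have h2 := integrable_f hK hNq
    have h3 := integrable_f hK hNr
    have hc1 := cont_f hK hp.2.2.1 hp.2.1
    have hc2 := cont_f hK hq.2.2.1 hq.2.1
    have hc3 := cont_f hK hNr.1 hNr.2.1
    have hstr : ∃ x0 : ℝ,
        (c < 0 ∧ p x0 ≠ q x0) ∨
        (StrictConcaveOn ℝ Set.univ (K0 x0) ∧ deriv p x0 / p x0 ≠ deriv q x0 / q x0) := by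
      rcases hdisj with hcneg | hsc
      · obtain ⟨x0, hx0⟩ := Function.ne_iff.mp hpq
        exact ⟨x0, Or.inl ⟨hcneg, hx0⟩⟩
      · obtain ⟨x0, hx0⟩ := exists_slope_ne hp hq hpq
        exact ⟨x0, Or.inr ⟨hsc x0, hx0⟩⟩
    obtain ⟨x0, hx0⟩ := hstr
    simp only [PhiK1]
    have key : (∫ x, (t * (ev1 K p x * p x) + (1 - t) * (ev1 K q x * q x)))
        < ∫ x, ev1 K (fun x => t * p x + (1 - t) * q x) x * (t * p x + (1 - t) * q x) := by
      refine integral_lt_of_le_of_lt ((h1.const_mul t).add (h2.const_mul (1 - t))) h3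
        ((continuous_const.mul hc1).add (continuous_const.mul hc2)) hc3
        (fun x => pointwise_le hc hconc hp.2.2.1 hp.2.1 hq.2.2.1 hq.2.1 ht0.le ht1.le x)
        (pointwise_lt hc hconc hp.2.2.1 hp.2.1 hq.2.2.1 hq.2.1 ht0 ht1 x0 hx0)
    rwa [integral_add (h1.const_mul t) (h2.const_mul (1 - t)), MeasureTheory.integral_const_mul,
      MeasureTheory.integral_const_mul] at key
end

section
/- Let Φ : 𝒫 → ℝ be a concave functional (Φ(t·p + (1−t)·q) ≥ t·Φ(p) + (1−t)·Φ(q) for all p, q ∈ 𝒫, t ∈ [0,1]) admitting at each p ∈ 𝒫 a supergradient Φ*(·, p) : ℝ → ℝ, that is, a function with Φ*(·, p)·p and Φ*(·, p)·q integrable and Φ(q) − Φ(p) − ∫_ℝ Φ*(x, p)·(q(x) − p(x)) dx ≤ 0 for all q ∈ 𝒫. Then the scoring rule S(x, p) = Φ*(x, p) − ∫_ℝ Φ*(y, p) p(y) dy + Φ(p) is proper relative to 𝒫, and ∫_ℝ S(x, p) p(x) dx = Φ(p) for every p ∈ 𝒫. Conversely, if S is a scoring rule proper relative to 𝒫 with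 S(·, q)·p integrable for all p, q ∈ 𝒫, then the functional Φ(p) = ∫_ℝ S(x, p) p(x) dx is concave on 𝒫 and S(·, p) is a supergradient of Φ at every p ∈ 𝒫. These statements continue to hold with concave replaced by strictly concave and proper replaced by strictly proper. -/
open MeasureTheory Filter Set

noncomputable section

/-- `Φs` is a supergradient of `Φ` at every `p ∈ 𝒫` (with the required integrabilities). -/
def Supergradient (Φ : (ℝ → ℝ) → ℝ) (Φs : ℝ → (ℝ → ℝ) → ℝ) : Prop :=
  ∀ p q : ℝ → ℝ, memP p → memP q →
    Integrable (fun x => Φs x p * p x) ∧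
    Integrable (fun x => Φs x p * q x) ∧
    Φ q - Φ p - (∫ x, Φs x p * (q x - p x)) ≤ 0

/-- The scoring rule built from a functional and its supergradient. -/
def SG (Φ : (ℝ → ℝ) → ℝ) (Φs : ℝ → (ℝ → ℝ) → ℝ) (x : ℝ) (p : ℝ → ℝ) : ℝ :=
  Φs x p - (∫ y, Φs y p * p y) + Φ p

lemma integrable_of_memP {p : ℝ → ℝ} (hp : memP p) : Integrable p := by
  by_contra h
  have h1 := hp.1
  rw [integral_undef h] at h1
  norm_num at h1

lemma iteratedDeriv_lin {n : ℕ} {f g : ℝ → ℝ} (hf : ContDiff ℝ n f) (hg : ContDiff ℝ n g)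
    (a b : ℝ) (x : ℝ) :
    iteratedDeriv n (fun y => a * f y + b * g y) x
      = a * iteratedDeriv n f x + b * iteratedDeriv n g x := by
  have h1 : (fun y => a * f y + b * g y) = (fun y => a * f y) + (fun y => b * g y) := rfl
  have h2 : (fun y => a * f y) = a • f := by funext y; simp
  have h3 : (fun y => b * g y) = b • g := by funext y; simp
  rw [h1, iteratedDeriv, iteratedDeriv, iteratedDeriv,
    iteratedFDeriv_add_apply (contDiff_const.mul hf).contDiffAt (contDiff_const.mul hg).contDiffAt,
    h2, h3, iteratedFDeriv_const_smul_apply hf.contDiffAt, iteratedFDeriv_const_smul_apply hg.contDiffAt]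
  simp

lemma memP_combo {p q : ℝ → ℝ} (hp : memP p) (hq : memP q) {t : ℝ}
    (ht0 : 0 ≤ t) (ht1 : t ≤ 1) : memP (fun x => t * p x + (1 - t) * q x) := by
  rcases eq_or_lt_of_le ht0 with h0 | h0
  · have he : (fun x => t * p x + (1 - t) * q x) = q := by funext x; rw [← h0]; ring
    rw [he]; exact hq
  rcases eq_or_lt_of_le ht1 with h1 | h1
  · have he : (fun x => t * p x + (1 - t) * q x) = p := by funext x; rw [h1]; ring
    rw [he]; exact hp
  obtain ⟨hp1, hp2, hp3, hp4, ap, hap, hp5⟩ := hp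
  obtain ⟨hq1, hq2, hq3, hq4, aq, haq, hq5⟩ := hq
  have hIp : Integrable p := integrable_of_memP ⟨hp1, hp2, hp3, hp4, ap, hap, hp5⟩
  have hIq : Integrable q := integrable_of_memP ⟨hq1, hq2, hq3, hq4, aq, haq, hq5⟩
  have hd : ∀ j ≤ 4, ∀ x, iteratedDeriv j (fun x => t * p x + (1 - t) * q x) x
      = t * iteratedDeriv j p x + (1 - t) * iteratedDeriv j q x := by
    intro j hj x
    exact iteratedDeriv_lin (hp3.of_le (by exact_mod_cast hj))
      (hq3.of_le (by exact_mod_cast hj)) t (1 - t) x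
  refine ⟨?_, ?_, ?_, ?_, ?_⟩
  · rw [integral_add (hIp.const_mul t) (hIq.const_mul (1 - t)),
      integral_const_mul, integral_const_mul, hp1, hq1]
    ring
  · intro x
    show 0 < t * p x + (1 - t) * q x
    have h2 : 0 < t * p x := mul_pos h0 (hp2 x)
    have h3 : 0 < (1 - t) * q x := mul_pos (by linarith) (hq2 x)
    linarith
  · exact (contDiff_const.mul hp3).add (contDiff_const.mul hq3)
  · intro m hm j hj
    have h4 := ((hp4 m hm j hj).const_mul t).add ((hq4 m hm j hj).const_mul (1 - t))
    simp only [mul_zero, add_zero] at h4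
    refine h4.congr (fun x => ?_)
    rw [hd j hj x]; ring
  · refine ⟨max ap aq, lt_max_of_lt_left hap, ?_⟩
    intro j hj1 hj4
    have hev : ∀ᶠ x : ℝ in atTop ⊔ atBot, 1 ≤ |x| := by
      rw [eventually_sup]
      constructor
      · filter_upwards [eventually_ge_atTop (1 : ℝ)] with x hx
        exact hx.trans (le_abs_self x)
      · filter_upwards [eventually_le_atBot (-1 : ℝ)] with x hx
        calc (1 : ℝ) ≤ -x := by linarith
        _ ≤ |x| := neg_le_abs x
    apply squeeze_zero_norm'
      (a := fun x => |x| ^ (-ap) * |iteratedDeriv j p x / p x|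
        + |x| ^ (-aq) * |iteratedDeriv j q x / q x|)
    · filter_upwards [hev] with x hx
      have hpx := hp2 x
      have hqx := hq2 x
      have hR : 0 < t * p x + (1 - t) * q x := by nlinarith
      have hxa : (0:ℝ) ≤ |x| := abs_nonneg x
      set Pj := iteratedDeriv j p x with hPj
      set Qj := iteratedDeriv j q x with hQj
      have hratio : |iteratedDeriv j (fun x => t * p x + (1 - t) * q x) x
          / (t * p x + (1 - t) * q x)| ≤ |Pj| / p x + |Qj| / q x := by
        rw [hd j hj4 x, abs_div, abs_of_pos hR]
        have hnum : |t * Pj + (1 - t) * Qj| ≤ t * |Pj| + (1 - t) * |Qj| := by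
          calc |t * Pj + (1 - t) * Qj| ≤ |t * Pj| + |(1 - t) * Qj| := abs_add_le _ _
          _ = t * |Pj| + (1 - t) * |Qj| := by
              rw [abs_mul, abs_mul, abs_of_pos h0, abs_of_pos (by linarith : (0:ℝ) < 1 - t)]
        have h5 : (t * |Pj| + (1 - t) * |Qj|) / (t * p x + (1 - t) * q x)
            ≤ |Pj| / p x + |Qj| / q x := by
          rw [div_add_div _ _ (ne_of_gt hpx) (ne_of_gt hqx), div_le_div_iff₀ hR (by positivity)]
          have e1 : 0 ≤ (1 - t) * (|Pj| * (q x * q x)) :=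
            mul_nonneg (by linarith) (by positivity)
          have e2 : 0 ≤ t * (|Qj| * (p x * p x)) :=
            mul_nonneg (le_of_lt h0) (by positivity)
          nlinarith [e1, e2]
        calc |t * Pj + (1 - t) * Qj| / (t * p x + (1 - t) * q x)
            ≤ (t * |Pj| + (1 - t) * |Qj|) / (t * p x + (1 - t) * q x) :=
              (div_le_div_iff_of_pos_right hR).mpr hnum
        _ ≤ |Pj| / p x + |Qj| / q x := h5
      have hra : (0:ℝ) ≤ |x| ^ (-(max ap aq)) := Real.rpow_nonneg hxa _
      have hle1 : |x| ^ (-(max ap aq)) ≤ |x| ^ (-ap) :=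
        Real.rpow_le_rpow_of_exponent_le hx (by simp [le_max_left])
      have hle2 : |x| ^ (-(max ap aq)) ≤ |x| ^ (-aq) :=
        Real.rpow_le_rpow_of_exponent_le hx (by simp [le_max_right])
      rw [Real.norm_eq_abs, abs_mul, abs_of_nonneg hra]
      have hrq0 : (0:ℝ) ≤ |iteratedDeriv j (fun x => t * p x + (1 - t) * q x) x
          / (t * p x + (1 - t) * q x)| := abs_nonneg _
      calc |x| ^ (-(max ap aq)) * |iteratedDeriv j (fun x => t * p x + (1 - t) * q x) x
            / (t * p x + (1 - t) * q x)|
          ≤ |x| ^ (-(max ap aq)) * (|Pj| / p x + |Qj| / q x) := by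
            exact mul_le_mul_of_nonneg_left hratio hra
      _ ≤ |x| ^ (-ap) * (|Pj| / p x) + |x| ^ (-aq) * (|Qj| / q x) := by
            have hPp : (0:ℝ) ≤ |Pj| / p x := by positivity
            have hQq : (0:ℝ) ≤ |Qj| / q x := by positivity
            nlinarith
      _ = |x| ^ (-ap) * |Pj / p x| + |x| ^ (-aq) * |Qj / q x| := by
            rw [abs_div, abs_div, abs_of_pos hpx, abs_of_pos hqx]
    · have h6 := (hp5 j hj1 hj4).abs.add (hq5 j hj1 hj4).abs
      simp only [abs_zero, add_zero] at h6
      refine h6.congr (fun x => ?_)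
      rw [abs_mul, abs_of_nonneg (Real.rpow_nonneg (abs_nonneg x) _),
        abs_mul, abs_of_nonneg (Real.rpow_nonneg (abs_nonneg x) _)]

/-- Value of the score `SG` against an arbitrary density `p ∈ 𝒫`. -/
lemma SG_integral (Φ : (ℝ → ℝ) → ℝ) (Φs : ℝ → (ℝ → ℝ) → ℝ) {p q : ℝ → ℝ}
    (hIqp : Integrable (fun x => Φs x q * p x)) (hIp : Integrable p)
    (hp1 : (∫ x, p x) = 1) :
    (∫ x, SG Φ Φs x q * p x)
      = Φ q + ((∫ x, Φs x q * p x) - ∫ y, Φs y q * q y) := by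
  have he : (fun x => SG Φ Φs x q * p x)
      = fun x => Φs x q * p x + (Φ q - ∫ y, Φs y q * q y) * p x := by
    funext x; simp only [SG]; ring
  rw [he, integral_add hIqp (hIp.const_mul _), integral_const_mul, hp1]
  ring

theorem statement6 :
    (∀ (Φ : (ℝ → ℝ) → ℝ) (Φs : ℝ → (ℝ → ℝ) → ℝ),
      ConcaveOnP Φ → Supergradient Φ Φs →
        Proper (SG Φ Φs) ∧ ∀ p, memP p → (∫ x, SG Φ Φs x p * p x) = Φ p) ∧
    (∀ S : ℝ → (ℝ → ℝ) → ℝ,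
      (∀ p q : ℝ → ℝ, memP p → memP q → Integrable (fun x => S x q * p x)) →
      Proper S →
        ConcaveOnP (fun p => ∫ x, S x p * p x) ∧
        Supergradient (fun p => ∫ x, S x p * p x) S) ∧
    (∀ (Φ : (ℝ → ℝ) → ℝ) (Φs : ℝ → (ℝ → ℝ) → ℝ),
      StrictConcaveOnP Φ → Supergradient Φ Φs →
        StrictlyProper (SG Φ Φs) ∧ ∀ p, memP p → (∫ x, SG Φ Φs x p * p x) = Φ p) ∧
    (∀ S : ℝ → (ℝ → ℝ) → ℝ,
      (∀ p q : ℝ → ℝ, memP p → memP q → Integrable (fun x => S x q * p x)) →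
      StrictlyProper S →
        StrictConcaveOnP (fun p => ∫ x, S x p * p x) ∧
        Supergradient (fun p => ∫ x, S x p * p x) S) := by
  -- rearranged supergradient inequality
  have key : ∀ (Φ : (ℝ → ℝ) → ℝ) (Φs : ℝ → (ℝ → ℝ) → ℝ), Supergradient Φ Φs →
      ∀ p q, memP p → memP q →
      ((∫ x, SG Φ Φs x p * p x) = Φ p ∧
        (∫ x, SG Φ Φs x q * p x)
          = Φ q + ((∫ x, Φs x q * p x) - ∫ y, Φs y q * q y) ∧
        Φ p ≤ Φ q + ((∫ x, Φs x q * p x) - ∫ y, Φs y q * q y)) := by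
    intro Φ Φs hSup p q hp hq
    obtain ⟨Iqq, Iqp, hineq⟩ := hSup q p hq hp
    obtain ⟨Ipp, _, _⟩ := hSup p p hp hp
    have hIp : Integrable p := integrable_of_memP hp
    refine ⟨?_, SG_integral Φ Φs Iqp hIp hp.1, ?_⟩
    · rw [SG_integral Φ Φs Ipp hIp hp.1]; ring
    · have hsub : (∫ x, Φs x q * (p x - q x))
          = (∫ x, Φs x q * p x) - ∫ y, Φs y q * q y := by
        have he : (fun x => Φs x q * (p x - q x))
            = fun x => Φs x q * p x - Φs x q * q x := by funext x; ring
        rw [he, integral_sub Iqp Iqq]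
      rw [← hsub]; linarith
  -- linearity of the integral against a convex combination
  have lin : ∀ (S : ℝ → (ℝ → ℝ) → ℝ),
      (∀ p q : ℝ → ℝ, memP p → memP q → Integrable (fun x => S x q * p x)) →
      ∀ p q, memP p → memP q → ∀ t : ℝ, 0 ≤ t → t ≤ 1 →
      (∫ x, S x (fun y => t * p y + (1 - t) * q y) * (t * p x + (1 - t) * q x))
        = t * (∫ x, S x (fun y => t * p y + (1 - t) * q y) * p x)
          + (1 - t) * (∫ x, S x (fun y => t * p y + (1 - t) * q y) * q x) := by
    intro S hInt p q hp hq t ht0 ht1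
    have hr := memP_combo hp hq ht0 ht1
    have I1 := hInt p _ hp hr
    have I2 := hInt q _ hq hr
    have he : (fun x => S x (fun y => t * p y + (1 - t) * q y) * (t * p x + (1 - t) * q x))
        = fun x => t * (S x (fun y => t * p y + (1 - t) * q y) * p x)
          + (1 - t) * (S x (fun y => t * p y + (1 - t) * q y) * q x) := by
      funext x; ring
    rw [he, integral_add (I1.const_mul t) (I2.const_mul (1 - t)),
      integral_const_mul, integral_const_mul]
  -- propriety of the converse direction, shared by parts 2 and 4
  have conv_sup : ∀ (S : ℝ → (ℝ → ℝ) → ℝ),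
      (∀ p q : ℝ → ℝ, memP p → memP q → Integrable (fun x => S x q * p x)) →
      Proper S → Supergradient (fun p => ∫ x, S x p * p x) S := by
    intro S hInt hS p q hp hq
    refine ⟨hInt p p hp hp, hInt q p hq hp, ?_⟩
    have hsub : (∫ x, S x p * (q x - p x))
        = (∫ x, S x p * q x) - ∫ x, S x p * p x := by
      have he : (fun x => S x p * (q x - p x)) = fun x => S x p * q x - S x p * p x := by
        funext x; ring
      rw [he, integral_sub (hInt q p hq hp) (hInt p p hp hp)]
    have h1 := hS q p hq hp
    simp only []
    rw [hsub]
    linarith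
  refine ⟨?_, ?_, ?_, ?_⟩
  · -- Part 1
    intro Φ Φs _ hSup
    constructor
    · intro p q hp hq
      obtain ⟨h1, h2, h3⟩ := key Φ Φs hSup p q hp hq
      rw [h1, h2]; exact h3
    · intro p hp
      exact (key Φ Φs hSup p p hp hp).1
  · -- Part 2
    intro S hInt hS
    refine ⟨?_, conv_sup S hInt hS⟩
    intro p q hp hq t ht
    obtain ⟨ht0, ht1⟩ := ht
    have hr := memP_combo hp hq ht0 ht1
    simp only []
    rw [lin S hInt p q hp hq t ht0 ht1]
    have h1 := hS p _ hp hr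
    have h2 := hS q _ hq hr
    nlinarith [mul_le_mul_of_nonneg_left h1 ht0,
      mul_le_mul_of_nonneg_left h2 (by linarith : (0:ℝ) ≤ 1 - t)]
  · -- Part 3
    intro Φ Φs hSC hSup
    constructor
    · intro p q hp hq
      obtain ⟨h1, h2, h3⟩ := key Φ Φs hSup p q hp hq
      refine ⟨by rw [h1, h2]; exact h3, ?_⟩
      intro heq
      by_contra hne
      rw [h1, h2] at heq
      -- the midpoint
      have hr := memP_combo hp hq (by norm_num : (0:ℝ) ≤ 1/2) (by norm_num : (1:ℝ)/2 ≤ 1)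
      have hstrict := hSC p q hp hq (fun h => hne h.symm) (1/2) (by norm_num)
      obtain ⟨Iqq, Iqp, _⟩ := hSup q p hq hp
      obtain ⟨_, _, hineq⟩ := hSup q _ hq hr
      have hsub : (∫ x, Φs x q * ((1/2 * p x + (1 - 1/2) * q x) - q x))
          = 1/2 * ((∫ x, Φs x q * p x) - ∫ y, Φs y q * q y) := by
        have he : (fun x => Φs x q * ((1/2 * p x + (1 - 1/2) * q x) - q x))
            = fun x => 1/2 * (Φs x q * p x) - 1/2 * (Φs x q * q x) := by
          funext x; ring
        rw [he, integral_sub (Iqp.const_mul _) (Iqq.const_mul _),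
          integral_const_mul, integral_const_mul]
        ring
      rw [hsub] at hineq
      linarith
    · intro p hp
      exact (key Φ Φs hSup p p hp hp).1
  · -- Part 4
    intro S hInt hS
    have hS' : Proper S := fun p q hp hq => (hS p q hp hq).1
    refine ⟨?_, conv_sup S hInt hS'⟩
    intro p q hp hq hpq t ht
    obtain ⟨ht0, ht1⟩ := ht
    have hr := memP_combo hp hq (le_of_lt ht0) (le_of_lt ht1)
    have hrp : (fun x => t * p x + (1 - t) * q x) ≠ p := by
      intro h
      apply hpq
      funext x
      have hx := congrFun h x
      have h2 : (1 - t) * q x = (1 - t) * p x := by nlinarith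
      have := mul_left_cancel₀ (by linarith : (1:ℝ) - t ≠ 0) h2
      linarith
    have hrq : (fun x => t * p x + (1 - t) * q x) ≠ q := by
      intro h
      apply hpq
      funext x
      have hx := congrFun h x
      have h2 : t * q x = t * p x := by nlinarith
      have := mul_left_cancel₀ (ne_of_gt ht0) h2
      linarith
    have h1 : (∫ x, S x p * p x) < ∫ x, S x (fun y => t * p y + (1 - t) * q y) * p x := by
      obtain ⟨hle, heq⟩ := hS p _ hp hr
      exact lt_of_le_of_ne hle (fun h => hrp (heq h))
    have h2 : (∫ x, S x q * q x) < ∫ x, S x (fun y => t * p y + (1 - t) * q y) * q x := by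
      obtain ⟨hle, heq⟩ := hS q _ hq hr
      exact lt_of_le_of_ne hle (fun h => hrq (heq h))
    simp only []
    rw [lin S hInt p q hp hq t (le_of_lt ht0) (le_of_lt ht1)]
    nlinarith [mul_lt_mul_of_pos_left h1 ht0,
      mul_lt_mul_of_pos_left h2 (by linarith : (0:ℝ) < 1 - t)]

end
end

section
/- Let k ∈ {0, 1, 2, 3, 4}. For every x ∈ ℝ and every vector y = (y_0, …, y_k) ∈ ℝ^{k+1} there exists a density q ∈ 𝒫 such that (ln q)(x) = y_0, (ln q)'(x) = y_1, …, (ln q)^{(k)}(x) = y_k. -/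
open MeasureTheory Filter Set

noncomputable section Stmt14Aux

open Polynomial Real Topology Metric

namespace Stmt14

lemma contDiff_eval (p : ℝ[X]) {n : ℕ∞} : ContDiff ℝ n fun t : ℝ => p.eval t := by
  induction p using Polynomial.induction_on' with
  | add p q hp hq => simpa [Polynomial.eval_add] using hp.add hq
  | monomial i a =>
      simpa [Polynomial.eval_monomial] using (contDiff_const (c := a)).mul (contDiff_id.pow i)

/-- iterated "derivative polynomials" of `t ↦ exp (p.eval t)`. -/
def EP (p : ℝ[X]) : ℕ → ℝ[X]
  | 0 => 1
  | j + 1 => (EP p j).derivative + EP p j * p.derivative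

lemma iteratedDeriv_exp_eval (p : ℝ[X]) (j : ℕ) :
    iteratedDeriv j (fun t : ℝ => Real.exp (p.eval t)) =
      fun t => (EP p j).eval t * Real.exp (p.eval t) := by
  induction j with
  | zero => funext t; simp [EP]
  | succ j ih =>
      rw [iteratedDeriv_succ, ih]
      funext t
      have h1 : HasDerivAt (fun t : ℝ => (EP p j).eval t * Real.exp (p.eval t))
          ((EP p j).derivative.eval t * Real.exp (p.eval t) +
            (EP p j).eval t * (Real.exp (p.eval t) * p.derivative.eval t)) t :=
        ((EP p j).hasDerivAt t).mul ((p.hasDerivAt t).exp)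
      rw [h1.deriv]
      simp only [EP, Polynomial.eval_add, Polynomial.eval_mul]
      ring

lemma iteratedDeriv_eval (p : ℝ[X]) (j : ℕ) :
    iteratedDeriv j (fun t : ℝ => p.eval t) =
      fun t => (Polynomial.derivative^[j] p).eval t := by
  induction j generalizing p with
  | zero => simp
  | succ j ih =>
      rw [iteratedDeriv_succ']
      have hd : (deriv fun t : ℝ => p.eval t) = fun t : ℝ => p.derivative.eval t :=
        funext fun t => p.deriv
      rw [hd, ih p.derivative, Function.iterate_succ_apply]

/-- Sum of absolute values of coefficients. -/
def coeffSum (p : ℝ[X]) : ℝ := ∑ i ∈ Finset.range (p.natDegree + 1), |p.coeff i|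

lemma coeffSum_nonneg (p : ℝ[X]) : 0 ≤ coeffSum p :=
  Finset.sum_nonneg fun _ _ => abs_nonneg _

lemma abs_eval_le (p : ℝ[X]) (t : ℝ) :
    |p.eval t| ≤ coeffSum p * (1 + |t|) ^ p.natDegree := by
  rw [Polynomial.eval_eq_sum_range, coeffSum, Finset.sum_mul]
  refine (Finset.abs_sum_le_sum_abs _ _).trans (Finset.sum_le_sum ?_)
  intro i hi
  rw [abs_mul, abs_pow]
  have h1 : |t| ^ i ≤ (1 + |t|) ^ p.natDegree := by
    calc |t| ^ i ≤ (1 + |t|) ^ i :=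
          pow_le_pow_left₀ (abs_nonneg t) (by linarith [abs_nonneg t]) i
      _ ≤ (1 + |t|) ^ p.natDegree := by
          apply pow_le_pow_right₀ (by linarith [abs_nonneg t])
          exact Finset.mem_range_succ_iff.mp hi
  exact mul_le_mul_of_nonneg_left h1 (abs_nonneg _)

lemma decay_atTop (m : ℝ) (d : ℕ) (B a : ℝ) :
    Tendsto (fun t : ℝ => |t| ^ m * ((1 + |t|) ^ d * Real.exp (B - (t - a) ^ 2)))
      atTop (𝓝 0) := by
  have key := tendsto_rpow_mul_exp_neg_mul_atTop_nhds_zero (m + d) 1 one_pos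
  have key2 : Tendsto
      (fun t : ℝ => (2 ^ d * Real.exp (B + a)) * (t ^ (m + (d : ℝ)) * Real.exp (-1 * t)))
      atTop (𝓝 0) := by
    simpa using key.const_mul (2 ^ d * Real.exp (B + a))
  refine squeeze_zero' ?_ ?_ key2
  · filter_upwards with t
    positivity
  · filter_upwards [eventually_ge_atTop (1 : ℝ), eventually_ge_atTop (a + 1)] with t h1 h2
    have ht : (0 : ℝ) < t := by linarith
    have habs : |t| = t := abs_of_pos ht
    have e2 : (1 + |t|) ^ d ≤ (2 * t) ^ d := by
      apply pow_le_pow_left₀ (by positivity)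
      rw [habs]; linarith
    have e3 : Real.exp (B - (t - a) ^ 2) ≤ Real.exp (B + a) * Real.exp (-1 * t) := by
      rw [← Real.exp_add]
      apply Real.exp_le_exp.2
      nlinarith [sq_nonneg (t - a - 1)]
    calc |t| ^ m * ((1 + |t|) ^ d * Real.exp (B - (t - a) ^ 2))
        ≤ |t| ^ m * ((2 * t) ^ d * (Real.exp (B + a) * Real.exp (-1 * t))) := by
          apply mul_le_mul_of_nonneg_left _ (Real.rpow_nonneg (abs_nonneg t) m)
          exact mul_le_mul e2 e3 (Real.exp_pos _).le (by positivity)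
      _ = 2 ^ d * Real.exp (B + a) * (t ^ (m + (d : ℝ)) * Real.exp (-1 * t)) := by
          rw [habs, mul_pow, ← Real.rpow_natCast t d, Real.rpow_add ht]
          ring

lemma decay_sup (m : ℝ) (d : ℕ) (B a : ℝ) :
    Tendsto (fun t : ℝ => |t| ^ m * ((1 + |t|) ^ d * Real.exp (B - (t - a) ^ 2)))
      (atTop ⊔ atBot) (𝓝 0) := by
  rw [tendsto_sup]
  refine ⟨decay_atTop m d B a, ?_⟩
  have h := (decay_atTop m d B (-a)).comp tendsto_neg_atBot_atTop
  refine h.congr fun t => ?_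
  simp only [Function.comp_apply, abs_neg]
  congr 2
  ring

lemma tendsto_abs_sup : Tendsto (fun t : ℝ => |t|) (atTop ⊔ atBot) atTop :=
  tendsto_sup.2 ⟨tendsto_abs_atTop_atTop, tendsto_abs_atBot_atTop⟩

lemma poly_decay (G : ℝ[X]) (a : ℝ) (ha : (G.natDegree : ℝ) + 1 ≤ a) :
    Tendsto (fun t : ℝ => |t| ^ (-a) * G.eval t) (atTop ⊔ atBot) (𝓝 0) := by
  have habs := tendsto_abs_sup
  have hpos : (0 : ℝ) < a - G.natDegree := by linarith
  have key : Tendsto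
      (fun s : ℝ => coeffSum G * 2 ^ G.natDegree * s ^ (-(a - (G.natDegree : ℝ))))
      atTop (𝓝 0) := by
    simpa using (tendsto_rpow_neg_atTop hpos).const_mul (coeffSum G * 2 ^ G.natDegree)
  have key2 := key.comp habs
  refine squeeze_zero_norm' ?_ key2
  filter_upwards [habs.eventually (eventually_ge_atTop (1 : ℝ))] with t h1
  have h0 : (0 : ℝ) < |t| := lt_of_lt_of_le one_pos h1
  have hGb : |G.eval t| ≤ coeffSum G * (2 * |t|) ^ G.natDegree := by
    refine (abs_eval_le G t).trans ?_
    apply mul_le_mul_of_nonneg_left _ (coeffSum_nonneg G)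
    apply pow_le_pow_left₀ (by positivity)
    linarith
  have hnorm : ‖|t| ^ (-a) * G.eval t‖ = |t| ^ (-a) * |G.eval t| := by
    rw [Real.norm_eq_abs, abs_mul, abs_of_nonneg (Real.rpow_nonneg (abs_nonneg t) _)]
  rw [hnorm, Function.comp_apply]
  calc |t| ^ (-a) * |G.eval t| ≤ |t| ^ (-a) * (coeffSum G * (2 * |t|) ^ G.natDegree) :=
        mul_le_mul_of_nonneg_left hGb (Real.rpow_nonneg (abs_nonneg t) _)
    _ = coeffSum G * 2 ^ G.natDegree * |t| ^ (-(a - (G.natDegree : ℝ))) := by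
        rw [mul_pow, ← Real.rpow_natCast |t| G.natDegree,
          show (-(a - (G.natDegree : ℝ))) = -a + G.natDegree by ring, Real.rpow_add h0]
        ring

lemma iteratedDeriv_add' {f g : ℝ → ℝ} {n : ℕ} (hf : ContDiff ℝ n f) (hg : ContDiff ℝ n g)
    (t : ℝ) :
    iteratedDeriv n (fun s => f s + g s) t = iteratedDeriv n f t + iteratedDeriv n g t := by
  simp only [← iteratedDerivWithin_univ]
  exact iteratedDerivWithin_add (Set.mem_univ t) uniqueDiffOn_univ hf.contDiffWithinAt hg.contDiffWithinAt

lemma iteratedDeriv_const_mul' {g : ℝ → ℝ} {n : ℕ} (hg : ContDiff ℝ n g) (c : ℝ) (t : ℝ) :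
    iteratedDeriv n (fun s => c * g s) t = c * iteratedDeriv n g t := by
  simp only [← iteratedDerivWithin_univ]
  exact iteratedDerivWithin_const_mul (Set.mem_univ t) uniqueDiffOn_univ c hg.contDiffWithinAt

lemma iteratedDeriv_zero_fun {n : ℕ} : iteratedDeriv n (fun _ : ℝ => (0 : ℝ)) = fun _ => 0 := by
  induction n with
  | zero => simp
  | succ n ih => rw [iteratedDeriv_succ, ih]; funext t; simp

lemma eventually_far (b R : ℝ) : ∀ᶠ t : ℝ in atTop ⊔ atBot, R < |t - b| := by
  rw [eventually_sup]
  constructor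
  · filter_upwards [eventually_ge_atTop (b + |R| + 1)] with t ht
    have : 0 ≤ t - b - |R| - 1 + (|R| + 1 - R) := by
      have := le_abs_self R; linarith
    rw [abs_of_pos (by linarith [abs_nonneg R] : (0:ℝ) < t - b)]
    linarith [le_abs_self R]
  · filter_upwards [eventually_le_atBot (b - |R| - 1)] with t ht
    rw [abs_of_neg (by linarith [abs_nonneg R] : t - b < 0)]
    linarith [le_abs_self R]

end Stmt14

end Stmt14Aux

open Polynomial Topology in
set_option maxHeartbeats 2000000 in
theorem statement14 (k : ℕ) (hk : k ≤ 4) (x : ℝ) (y : Fin (k + 1) → ℝ) :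
    ∃ q : ℝ → ℝ, memP q ∧
      ∀ j : Fin (k + 1), iteratedDeriv (j : ℕ) (fun t => Real.log (q t)) x = y j := by
  classical
  -- the jet polynomial and size constant
  set P : Polynomial ℝ :=
    ∑ i : Fin (k + 1), C (y i / (Nat.factorial (i : ℕ) : ℝ)) * (X - C x) ^ (i : ℕ) with hP
  set A : ℝ := ∑ i : Fin (k + 1), |y i| with hA
  have hA0 : 0 ≤ A := Finset.sum_nonneg fun _ _ => abs_nonneg _
  have hpow : ∀ (u : ℝ) (i : ℕ), i ≤ 6 → |u| ^ i ≤ 1 + u ^ 6 := by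
    intro u i hi
    have h6 : |u| ^ 6 = u ^ 6 := by
      rw [← abs_pow]; exact abs_of_nonneg (by positivity)
    rcases le_or_gt |u| 1 with h | h
    · have h1 : |u| ^ i ≤ 1 := pow_le_one₀ (abs_nonneg u) h
      have h2 : (0:ℝ) ≤ u ^ 6 := by positivity
      linarith
    · have h2 : |u| ^ i ≤ |u| ^ 6 := pow_le_pow_right₀ h.le hi
      rw [h6] at h2
      linarith
  have hPbd : ∀ t : ℝ, |P.eval t| ≤ A * (1 + (t - x) ^ 6) := by
    intro t
    have hev : P.eval t
        = ∑ i : Fin (k + 1), y i / (Nat.factorial (i : ℕ) : ℝ) * (t - x) ^ (i : ℕ) := by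
      rw [hP, Polynomial.eval_finset_sum]
      simp
    rw [hev, hA, Finset.sum_mul]
    refine (Finset.abs_sum_le_sum_abs _ _).trans (Finset.sum_le_sum ?_)
    intro i _
    have hik : (i : ℕ) ≤ 6 := by have := i.2; omega
    rw [abs_mul, abs_div, abs_pow]
    have hfac : (1:ℝ) ≤ |(Nat.factorial (i : ℕ) : ℝ)| := by
      rw [abs_of_pos (by exact_mod_cast (Nat.factorial_pos _))]
      exact_mod_cast Nat.one_le_iff_ne_zero.2 (Nat.factorial_ne_zero _)
    have h1 : |y i| / |(Nat.factorial (i : ℕ) : ℝ)| ≤ |y i| :=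
      div_le_self (abs_nonneg _) hfac
    have h2 : |t - x| ^ (i : ℕ) ≤ 1 + (t - x) ^ 6 := hpow _ _ hik
    exact mul_le_mul h1 h2 (by positivity) (abs_nonneg _)
  have hEeval : ∀ c t : ℝ, (P - C c * (X - C x) ^ 6).eval t = P.eval t - c * (t - x) ^ 6 := by
    intro c t; simp
  have hEbd : ∀ c : ℝ, A + 1 ≤ c →
      ∀ t, (P - C c * (X - C x) ^ 6).eval t ≤ A + 1 - (t - x) ^ 2 := by
    intro c hc t
    have h1 := (le_abs_self (P.eval t)).trans (hPbd t)
    have h2 : (t - x) ^ 2 ≤ 1 + (t - x) ^ 6 := by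
      have := hpow (t - x) 2 (by norm_num)
      rwa [sq_abs] at this
    have h3 : (0:ℝ) ≤ (t - x) ^ 6 := by positivity
    rw [hEeval]
    nlinarith
  have hgauss : Integrable (fun t : ℝ => Real.exp (A + 1 - (t - x) ^ 2)) := by
    have h0 : Integrable (fun t : ℝ => Real.exp (-1 * (t - x) ^ 2)) :=
      (integrable_exp_neg_mul_sq one_pos).comp_sub_right x
    refine Integrable.congr (h0.const_mul (Real.exp (A + 1)))
      (Eventually.of_forall fun t => ?_)
    show Real.exp (A + 1) * Real.exp (-1 * (t - x) ^ 2) = Real.exp (A + 1 - (t - x) ^ 2)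
    rw [← Real.exp_add]; congr 1; ring
  have hcontExp : ∀ c : ℝ, Continuous fun t : ℝ => Real.exp ((P - C c * (X - C x) ^ 6).eval t) :=
    fun c => Real.continuous_exp.comp
      ((Stmt14.contDiff_eval (n := 0) (P - C c * (X - C x) ^ 6)).continuous)
  have hfInt : ∀ c : ℝ, A + 1 ≤ c →
      Integrable (fun t : ℝ => Real.exp ((P - C c * (X - C x) ^ 6).eval t)) := by
    intro c hc
    refine hgauss.mono' (hcontExp c).aestronglyMeasurable (Eventually.of_forall fun t => ?_)
    rw [Real.norm_eq_abs, abs_of_pos (Real.exp_pos _)]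
    exact Real.exp_le_exp.2 (hEbd c hc t)
  have hI0 : Tendsto (fun c : ℝ => ∫ t : ℝ, Real.exp ((P - C c * (X - C x) ^ 6).eval t))
      atTop (𝓝 0) := by
    have hbound : ∀ᶠ c : ℝ in atTop, ∀ᵐ t : ℝ,
        ‖Real.exp ((P - C c * (X - C x) ^ 6).eval t)‖ ≤ Real.exp (A + 1 - (t - x) ^ 2) := by
      filter_upwards [eventually_ge_atTop (A + 1)] with c hc
      refine Eventually.of_forall fun t => ?_
      rw [Real.norm_eq_abs, abs_of_pos (Real.exp_pos _)]
      exact Real.exp_le_exp.2 (hEbd c hc t)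
    have hmeas : ∀ᶠ c : ℝ in atTop, AEStronglyMeasurable
        (fun t : ℝ => Real.exp ((P - C c * (X - C x) ^ 6).eval t)) volume :=
      Eventually.of_forall fun c => (hcontExp c).aestronglyMeasurable
    have hlim : ∀ᵐ t : ℝ, Tendsto (fun c : ℝ => Real.exp ((P - C c * (X - C x) ^ 6).eval t))
        atTop (𝓝 (0:ℝ)) := by
      have hne : ∀ᵐ t : ℝ, t ≠ x := by
        have h1 : {t : ℝ | ¬t ≠ x} = {x} := by ext u; simp
        rw [MeasureTheory.ae_iff, h1]
        exact measure_singleton x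
      filter_upwards [hne] with t ht
      have hu6 : 0 < (t - x) ^ 6 := by
        have h0 : 0 < |t - x| := abs_pos.2 (sub_ne_zero.2 ht)
        calc (0:ℝ) < |t - x| ^ 6 := pow_pos h0 6
          _ = (t - x) ^ 6 := by rw [← abs_pow]; exact abs_of_nonneg (by positivity)
      have hmul : Tendsto (fun c : ℝ => c * (t - x) ^ 6) atTop atTop :=
        Tendsto.atTop_mul_const hu6 tendsto_id
      have hneg : Tendsto (fun c : ℝ => -(c * (t - x) ^ 6)) atTop atBot :=
        tendsto_neg_atTop_atBot.comp hmul
      have h1 : Tendsto (fun c : ℝ => P.eval t + -(c * (t - x) ^ 6)) atTop atBot :=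
        tendsto_atBot_add_const_left _ _ hneg
      refine (Real.tendsto_exp_atBot.comp h1).congr fun c => ?_
      simp only [Function.comp_apply]
      rw [hEeval]
      try congr 1
      try ring
    have hmain := MeasureTheory.tendsto_integral_filter_of_dominated_convergence
      (fun t => Real.exp (A + 1 - (t - x) ^ 2)) hmeas hbound hgauss hlim
    simpa using hmain
  obtain ⟨c, hc1, hc2⟩ :=
    ((eventually_ge_atTop (A + 1)).and (hI0.eventually_lt_const one_pos)).exists
  set Q : Polynomial ℝ := P - C c * (X - C x) ^ 6 with hQ
  -- the bump function
  set φ : ContDiffBump (x + 4) := ⟨1, 2, one_pos, one_lt_two⟩ with hφ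
  have hb0 : ∀ t : ℝ, 2 ≤ |t - (x + 4)| → φ.normed volume t = 0 := by
    intro t ht
    have hns : t ∉ Function.support (φ.normed volume) := by
      rw [φ.support_normed_eq]
      simp only [Metric.mem_ball, Real.dist_eq, not_lt]
      exact ht
    simpa [Function.mem_support, not_not] using hns
  set s : ℝ := 1 - ∫ t : ℝ, Real.exp (Q.eval t) with hs
  have hs0 : 0 < s := by rw [hs]; linarith
  have hfi : Integrable (fun t : ℝ => Real.exp (Q.eval t)) := by
    have := hfInt c hc1; rwa [← hQ] at this
  have hEbdQ : ∀ t : ℝ, Q.eval t ≤ A + 1 - (t - x) ^ 2 := by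
    intro t; have := hEbd c hc1 t; rwa [← hQ] at this
  have hbi : Integrable (fun t : ℝ => s * φ.normed volume t) :=
    (φ.integrable_normed).const_mul s
  -- value of the iterated derivatives of the combination
  have hfj : ∀ n : ℕ∞, ContDiff ℝ n fun t : ℝ => Real.exp (Q.eval t) :=
    fun n => Real.contDiff_exp.comp (Stmt14.contDiff_eval Q)
  have hbj : ∀ n : ℕ∞, ContDiff ℝ n fun t : ℝ => s * φ.normed volume t :=
    fun n => contDiff_const.mul φ.contDiff_normed
  have hiter : ∀ (j : ℕ) (t : ℝ),
      iteratedDeriv j (fun u : ℝ => Real.exp (Q.eval u) + s * φ.normed volume u) t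
        = (Stmt14.EP Q j).eval t * Real.exp (Q.eval t)
          + s * iteratedDeriv j (φ.normed volume) t := by
    intro j t
    rw [Stmt14.iteratedDeriv_add' (hfj j) (hbj j) t,
      congrFun (Stmt14.iteratedDeriv_exp_eval Q j) t,
      Stmt14.iteratedDeriv_const_mul' φ.contDiff_normed s t]
  have hDb0 : ∀ j : ℕ, ∀ᶠ t : ℝ in atTop ⊔ atBot, iteratedDeriv j (φ.normed volume) t = 0 := by
    intro j
    filter_upwards [Stmt14.eventually_far (x + 4) 2] with t ht
    have hev : (φ.normed volume : ℝ → ℝ) =ᶠ[𝓝 t] fun _ => 0 := by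
      have hopen : IsOpen {u : ℝ | 2 < |u - (x + 4)|} :=
        isOpen_lt continuous_const ((continuous_id.sub continuous_const).abs)
      filter_upwards [hopen.mem_nhds ht] with u hu
      exact hb0 u (le_of_lt hu)
    rw [Filter.EventuallyEq.iteratedDeriv_eq j hev, Stmt14.iteratedDeriv_zero_fun]
  -- the five defining properties
  have hint : (∫ t : ℝ, (Real.exp (Q.eval t) + s * φ.normed volume t)) = 1 := by
    rw [MeasureTheory.integral_add hfi hbi, MeasureTheory.integral_const_mul,
      φ.integral_normed]
    rw [hs]; ring
  have hpos : ∀ t : ℝ, 0 < Real.exp (Q.eval t) + s * φ.normed volume t := fun t =>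
    add_pos_of_pos_of_nonneg (Real.exp_pos _) (mul_nonneg hs0.le (φ.nonneg_normed t))
  have hcd : ContDiff ℝ 4 fun t : ℝ => Real.exp (Q.eval t) + s * φ.normed volume t :=
    (hfj 4).add (hbj 4)
  have hP3 : ∀ m : ℝ, 0 < m → ∀ j, j ≤ 4 →
      Tendsto (fun t : ℝ => |t| ^ m *
        iteratedDeriv j (fun u : ℝ => Real.exp (Q.eval u) + s * φ.normed volume u) t)
        (atTop ⊔ atBot) (𝓝 0) := by
    intro m _ j _
    have T1 : Tendsto (fun t : ℝ => |t| ^ m *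
        ((Stmt14.EP Q j).eval t * Real.exp (Q.eval t))) (atTop ⊔ atBot) (𝓝 0) := by
      have base := (Stmt14.decay_sup m (Stmt14.EP Q j).natDegree (A + 1) x).const_mul
        (Stmt14.coeffSum (Stmt14.EP Q j))
      rw [mul_zero] at base
      refine squeeze_zero_norm (fun t => ?_) base
      have hexp : Real.exp (Q.eval t) ≤ Real.exp (A + 1 - (t - x) ^ 2) :=
        Real.exp_le_exp.2 (hEbdQ t)
      have h1 : ‖|t| ^ m * ((Stmt14.EP Q j).eval t * Real.exp (Q.eval t))‖
          = |t| ^ m * (|(Stmt14.EP Q j).eval t| * Real.exp (Q.eval t)) := by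
        rw [Real.norm_eq_abs, abs_mul, abs_mul,
          abs_of_nonneg (Real.rpow_nonneg (abs_nonneg t) m), abs_of_pos (Real.exp_pos _)]
      rw [h1]
      calc |t| ^ m * (|(Stmt14.EP Q j).eval t| * Real.exp (Q.eval t))
          ≤ |t| ^ m * ((Stmt14.coeffSum (Stmt14.EP Q j)
              * (1 + |t|) ^ (Stmt14.EP Q j).natDegree) * Real.exp (A + 1 - (t - x) ^ 2)) := by
            refine mul_le_mul_of_nonneg_left ?_ (Real.rpow_nonneg (abs_nonneg t) m)
            exact mul_le_mul (Stmt14.abs_eval_le _ t) hexp (Real.exp_pos _).le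
              (mul_nonneg (Stmt14.coeffSum_nonneg _) (by positivity))
        _ = Stmt14.coeffSum (Stmt14.EP Q j) * (|t| ^ m * ((1 + |t|) ^ (Stmt14.EP Q j).natDegree
              * Real.exp (A + 1 - (t - x) ^ 2))) := by ring
    have T2 : Tendsto (fun t : ℝ => |t| ^ m * (s * iteratedDeriv j (φ.normed volume) t))
        (atTop ⊔ atBot) (𝓝 0) := by
      refine Tendsto.congr' ?_ tendsto_const_nhds
      filter_upwards [hDb0 j] with t ht
      simp [ht]
    have hsum := T1.add T2
    rw [add_zero] at hsum
    refine hsum.congr fun t => ?_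
    rw [hiter j t]
    ring
  have hP4 : ∃ a : ℝ, 0 < a ∧ ∀ j, 1 ≤ j → j ≤ 4 →
      Tendsto (fun t : ℝ => |t| ^ (-a) *
        (iteratedDeriv j (fun u : ℝ => Real.exp (Q.eval u) + s * φ.normed volume u) t /
          ((fun u : ℝ => Real.exp (Q.eval u) + s * φ.normed volume u) t)))
        (atTop ⊔ atBot) (𝓝 0) := by
    set N : ℕ := (Finset.range 5).sup fun i => (Stmt14.EP Q i).natDegree with hN
    refine ⟨(N : ℝ) + 1, by positivity, ?_⟩
    intro j hj1 hj4
    have hle : (Stmt14.EP Q j).natDegree ≤ N :=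
      Finset.le_sup (f := fun i => (Stmt14.EP Q i).natDegree) (Finset.mem_range.2 (by omega))
    have hGdeg : ((Stmt14.EP Q j).natDegree : ℝ) + 1 ≤ (N : ℝ) + 1 := by
      have := (Nat.cast_le (α := ℝ)).2 hle
      linarith
    have hpd := Stmt14.poly_decay (Stmt14.EP Q j) ((N : ℝ) + 1) hGdeg
    refine Tendsto.congr' ?_ hpd
    filter_upwards [Stmt14.eventually_far (x + 4) 2, hDb0 j] with t ht hDb
    have hb00 : φ.normed volume t = 0 := hb0 t ht.le
    rw [hiter j t, hDb, hb00, mul_zero, add_zero, add_zero,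
      mul_div_cancel_right₀ _ (Real.exp_ne_zero _)]
  -- the prescribed jet
  have hjet : ∀ j : Fin (k + 1),
      iteratedDeriv (j : ℕ)
        (fun t => Real.log (Real.exp (Q.eval t) + s * φ.normed volume t)) x = y j := by
    intro j
    have hjk : (j : ℕ) ≤ k := by have := j.2; omega
    have hev : (fun t : ℝ => Real.log (Real.exp (Q.eval t) + s * φ.normed volume t))
        =ᶠ[𝓝 x] fun t => Q.eval t := by
      filter_upwards [Metric.ball_mem_nhds x one_pos] with t ht
      rw [Metric.mem_ball, Real.dist_eq] at ht
      have habs := abs_lt.mp ht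
      have hfar : 2 ≤ |t - (x + 4)| := by
        have h2 : t - (x + 4) < 0 := by linarith [habs.2]
        rw [abs_of_neg h2]
        linarith [habs.2]
      rw [hb0 t hfar, mul_zero, add_zero, Real.log_exp]
    have h1 : iteratedDeriv (j : ℕ)
        (fun t => Real.log (Real.exp (Q.eval t) + s * φ.normed volume t)) x
        = (Polynomial.derivative^[(j : ℕ)] Q).eval x :=
      (Filter.EventuallyEq.iteratedDeriv_eq _ hev).trans
        (congrFun (Stmt14.iteratedDeriv_eval Q (j : ℕ)) x)
    rw [h1]
    have hsecond :
        (Polynomial.derivative^[(j : ℕ)] (C c * (X - C x) ^ 6)).eval x = 0 := by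
      rw [Polynomial.iterate_derivative_C_mul, Polynomial.iterate_derivative_X_sub_pow]
      have h60 : 6 - (j : ℕ) ≠ 0 := by omega
      simp [zero_pow h60]
    have hfirst : (Polynomial.derivative^[(j : ℕ)] P).eval x = y j := by
      rw [hP, Polynomial.iterate_derivative_sum, Polynomial.eval_finset_sum]
      rw [Finset.sum_eq_single j]
      · rw [Polynomial.iterate_derivative_C_mul, Polynomial.iterate_derivative_X_sub_pow,
          Nat.sub_self, pow_zero, Nat.descFactorial_self]
        have hfne : ((Nat.factorial (j : ℕ) : ℝ)) ≠ 0 := by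
          exact_mod_cast Nat.factorial_ne_zero _
        simp only [nsmul_eq_mul, mul_one, Polynomial.eval_mul, Polynomial.eval_C,
          Polynomial.eval_natCast]
        field_simp
      · intro i _ hij
        rw [Polynomial.iterate_derivative_C_mul, Polynomial.iterate_derivative_X_sub_pow]
        have hvij : (i : ℕ) ≠ (j : ℕ) := fun h => hij (Fin.ext h)
        rcases lt_or_gt_of_ne hvij with h | h
        · simp [Nat.descFactorial_eq_zero_iff_lt.2 h]
        · have hne0 : (i : ℕ) - (j : ℕ) ≠ 0 := by omega
          simp [zero_pow hne0]
      · intro h; exact absurd (Finset.mem_univ j) h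
    rw [hQ, Polynomial.iterate_derivative_sub, Polynomial.eval_sub, hfirst, hsecond, sub_zero]
  exact ⟨fun t => Real.exp (Q.eval t) + s * φ.normed volume t,
    ⟨hint, hpos, hcd, hP3, hP4⟩, hjet⟩
end

section
/- Let k ∈ {0, 1, 2, 3}, and let a, b : ℝ^{2+k} → ℝ be continuously differentiable functions of the arguments (x, y_0, …, y_k). Suppose that for every p ∈ 𝒫 the function z(x) = ln p(x) solves the differential equation z^{(k+1)}(x) · a(x, z(x), z'(x), …, z^{(k)}(x)) = b(x, z(x), z'(x), …, z^{(k)}(x)) for all x ∈ ℝ. Then a(x, ln p(x), (ln p)'(x), …, (ln p)^{(k)}(x)) = 0 for every x ∈ ℝ and every p ∈ 𝒫. -/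
open MeasureTheory Filter Set

namespace S17proof
open Polynomial Real


lemma contDiff_eval (P : ℝ[X]) {n : WithTop ℕ∞} : ContDiff ℝ n fun x : ℝ => P.eval x := by
  induction P using Polynomial.induction_on' with
  | add p q hp hq => simpa [Polynomial.eval_add] using hp.add hq
  | monomial n a =>
      simpa [Polynomial.eval_monomial] using (contDiff_const (c := a)).mul (contDiff_id.pow n)

lemma iteratedDeriv_eval (P : ℝ[X]) (n : ℕ) :
    iteratedDeriv n (fun x : ℝ => P.eval x) = fun x => (derivative^[n] P).eval x := by
  induction n with
  | zero => simp
  | succ n ih =>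
      rw [iteratedDeriv_succ, ih]
      funext x
      rw [Function.iterate_succ_apply', (derivative^[n] P).deriv]

lemma iteratedDeriv_eval_zero (P : ℝ[X]) (n : ℕ) :
    iteratedDeriv n (fun x : ℝ => P.eval x) 0 = (n.factorial : ℝ) * P.coeff n := by
  rw [iteratedDeriv_eval]
  simp only []
  rw [← Polynomial.coeff_zero_eq_eval_zero, Polynomial.coeff_iterate_derivative]
  simp [Nat.descFactorial_self]

/-- polynomial growth bound -/
lemma abs_eval_le (P : ℝ[X]) {D : ℕ} (hD : P.natDegree ≤ D) :
    ∃ S : ℝ, 0 ≤ S ∧ ∀ u : ℝ, |P.eval u| ≤ S * (1 + |u| ^ D) := by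
  refine ⟨∑ j ∈ Finset.range (D + 1), |P.coeff j|, Finset.sum_nonneg fun _ _ => abs_nonneg _,
    fun u => ?_⟩
  rw [Polynomial.eval_eq_sum_range' (Nat.lt_succ_of_le hD) u, Finset.sum_mul]
  refine (Finset.abs_sum_le_sum_abs _ _).trans (Finset.sum_le_sum fun j hj => ?_)
  rw [abs_mul, abs_pow]
  refine mul_le_mul_of_nonneg_left ?_ (abs_nonneg _)
  rcases le_or_gt |u| 1 with h | h
  · calc |u| ^ j ≤ 1 := pow_le_one₀ (abs_nonneg _) h
    _ ≤ 1 + |u| ^ D := le_add_of_nonneg_right (by positivity)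
  · calc |u| ^ j ≤ |u| ^ D := pow_le_pow_right₀ h.le (Finset.mem_range_succ_iff.mp hj)
    _ ≤ 1 + |u| ^ D := by linarith



/-- iterated derivative polynomials of `exp ∘ eval Q` -/
noncomputable def Rp (Q : ℝ[X]) : ℕ → ℝ[X]
  | 0 => 1
  | n + 1 => (Rp Q n).derivative + Rp Q n * Q.derivative

lemma hasDerivAt_expQ (Q : ℝ[X]) (u : ℝ) :
    HasDerivAt (fun x : ℝ => Real.exp (Q.eval x)) (Q.derivative.eval u * Real.exp (Q.eval u)) u := by
  simpa [mul_comm] using (Q.hasDerivAt u).exp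

lemma iteratedDeriv_expQ (Q : ℝ[X]) (n : ℕ) :
    iteratedDeriv n (fun x : ℝ => Real.exp (Q.eval x)) =
      fun u => (Rp Q n).eval u * Real.exp (Q.eval u) := by
  induction n with
  | zero => funext u; simp [Rp]
  | succ n ih =>
      rw [iteratedDeriv_succ, ih]
      funext u
      have h : HasDerivAt (fun x : ℝ => (Rp Q n).eval x * Real.exp (Q.eval x))
          ((Rp Q n).derivative.eval u * Real.exp (Q.eval u) +
            (Rp Q n).eval u * (Q.derivative.eval u * Real.exp (Q.eval u))) u :=
        ((Rp Q n).hasDerivAt u).mul (hasDerivAt_expQ Q u)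
      rw [h.deriv]
      simp [Rp]
      ring

lemma natDegree_Rp_le (Q : ℝ[X]) (hQ : Q.natDegree ≤ 10) (n : ℕ) :
    (Rp Q n).natDegree ≤ 9 * n := by
  induction n with
  | zero => simp [Rp]
  | succ n ih =>
      refine (Polynomial.natDegree_add_le _ _).trans (max_le ?_ ?_)
      · exact (Polynomial.natDegree_derivative_le _).trans (by omega)
      · refine (Polynomial.natDegree_mul_le).trans ?_
        have := Polynomial.natDegree_derivative_le Q
        omega



lemma abs_tendsto : Tendsto (abs : ℝ → ℝ) (atTop ⊔ atBot) atTop :=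
  tendsto_sup.mpr ⟨tendsto_abs_atTop_atTop, tendsto_abs_atBot_atTop⟩

lemma eventually_abs_ge (C : ℝ) : ∀ᶠ x : ℝ in atTop ⊔ atBot, C ≤ |x| :=
  abs_tendsto.eventually_ge_atTop C

lemma pow_le_exp {v : ℝ} (hv : 0 ≤ v) (D : ℕ) : v ^ D ≤ Real.exp ((D : ℝ) * v) := by
  calc v ^ D ≤ Real.exp v ^ D :=
        pow_le_pow_left₀ hv (by linarith [Real.add_one_le_exp v]) D
  _ = Real.exp ((D : ℝ) * v) := by rw [← Real.exp_nat_mul]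

lemma rpow_le_exp {v m : ℝ} (hv : 0 < v) (hm : 0 ≤ m) : v ^ m ≤ Real.exp (m * v) := by
  rw [Real.rpow_def_of_pos hv]
  refine Real.exp_le_exp.mpr ?_
  have := Real.log_le_sub_one_of_pos hv
  nlinarith [Real.log_le_sub_one_of_pos hv, hv.le]

/-- master decay lemma, one-sided -/
lemma ML1 (m S C : ℝ) (hm : 0 ≤ m) (hS : 0 ≤ S) (D : ℕ) :
    Tendsto (fun v : ℝ => (2*v) ^ m * (S * (1 + v ^ D)) * Real.exp (C - v ^ 10 / 2))
      atTop (nhds 0) := by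
  have hg : Tendsto (fun v : ℝ => (2 * S * Real.exp C) * Real.exp (-v)) atTop (nhds 0) := by
    have := (Real.tendsto_exp_atBot.comp tendsto_neg_atTop_atBot).const_mul
      (2 * S * Real.exp C)
    simpa using this
  refine squeeze_zero_norm' ?_ hg
  filter_upwards [eventually_ge_atTop (max 1 (2 * (2 * m + (D : ℝ) + 1)))] with v hv
  have hv1 : (1:ℝ) ≤ v := le_trans (le_max_left _ _) hv
  have hv0 : 0 < v := lt_of_lt_of_le one_pos hv1
  have h2v : (0:ℝ) < 2 * v := by linarith
  have e1 : (2*v) ^ m ≤ Real.exp (m * (2*v)) := rpow_le_exp h2v hm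
  have e2 : S * (1 + v ^ D) ≤ 2 * S * Real.exp ((D:ℝ) * v) := by
    have h1 : (1:ℝ) ≤ v ^ D := one_le_pow₀ hv1
    have h2 : v ^ D ≤ Real.exp ((D:ℝ) * v) := pow_le_exp hv0.le D
    have h3 : (1:ℝ) ≤ Real.exp ((D:ℝ) * v) := le_trans h1 h2
    nlinarith
  have hnn : 0 ≤ (2*v) ^ m * (S * (1 + v ^ D)) := by
    have := Real.rpow_nonneg h2v.le m
    have h1 : (0:ℝ) ≤ 1 + v ^ D := by positivity
    positivity
  rw [Real.norm_eq_abs, abs_of_nonneg (by positivity)]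
  calc (2*v) ^ m * (S * (1 + v ^ D)) * Real.exp (C - v ^ 10 / 2)
      ≤ Real.exp (m * (2*v)) * (2 * S * Real.exp ((D:ℝ) * v)) * Real.exp (C - v ^ 10 / 2) := by
        refine mul_le_mul_of_nonneg_right ?_ (Real.exp_nonneg _)
        refine mul_le_mul e1 e2 ?_ (Real.exp_nonneg _)
        nlinarith [one_le_pow₀ (n := D) hv1, hS]
    _ = (2 * S) * Real.exp (m * (2*v) + (D:ℝ) * v + (C - v ^ 10 / 2)) := by
        rw [Real.exp_add, Real.exp_add]; ring
    _ ≤ (2 * S) * Real.exp (C + -v) := by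
        refine mul_le_mul_of_nonneg_left (Real.exp_le_exp.mpr ?_) (by linarith)
        have hbig : 2 * (2 * m + (D : ℝ) + 1) ≤ v := le_trans (le_max_right _ _) hv
        have h9 : v ≤ v ^ 9 := le_self_pow₀ hv1 (by norm_num)
        have : v * (2 * (2 * m + (D:ℝ) + 1)) ≤ v * v ^ 9 :=
          mul_le_mul_of_nonneg_left (le_trans hbig h9) hv0.le
        have hv10 : v * v ^ 9 = v ^ 10 := by ring
        nlinarith
    _ = (2 * S * Real.exp C) * Real.exp (-v) := by rw [Real.exp_add]; ring

/-- master decay lemma, two-sided -/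
lemma ML (m S C : ℝ) (hm : 0 ≤ m) (hS : 0 ≤ S) (D : ℕ) :
    Tendsto (fun u : ℝ => (2*|u|) ^ m * (S * (1 + |u| ^ D)) * Real.exp (C - u ^ 10 / 2))
      (atTop ⊔ atBot) (nhds 0) := by
  have h : (fun u : ℝ => (2*|u|) ^ m * (S * (1 + |u| ^ D)) * Real.exp (C - u ^ 10 / 2)) =
      (fun v : ℝ => (2*v) ^ m * (S * (1 + v ^ D)) * Real.exp (C - v ^ 10 / 2)) ∘ abs := by
    have h10 : ∀ u : ℝ, u ^ 10 = |u| ^ 10 := fun u => by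
      rw [← abs_pow]; exact (abs_of_nonneg (by positivity)).symm
    funext u
    simp only [Function.comp_apply]
    rw [h10 u]
  rw [h]
  exact (ML1 m S C hm hS D).comp abs_tendsto

lemma ML2 (K : ℝ) : Tendsto (fun x : ℝ => K * |x|⁻¹) (atTop ⊔ atBot) (nhds 0) := by
  have := (tendsto_inv_atTop_zero.comp abs_tendsto).const_mul K
  simpa using this




noncomputable def Qlow (k : ℕ) (y : ℕ → ℝ) (w A : ℝ) : ℝ[X] :=
  (∑ j ∈ Finset.range (k+1), C (y j / j.factorial) * X ^ j)
    + C (w / (k+1).factorial) * X ^ (k+1) + C A * X ^ (2*k+2)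

noncomputable def Qp (k : ℕ) (y : ℕ → ℝ) (w A : ℝ) : ℝ[X] := Qlow k y w A - X ^ 10

lemma natDegree_Qlow_le (k : ℕ) (hk : k ≤ 3) (y : ℕ → ℝ) (w A : ℝ) :
    (Qlow k y w A).natDegree ≤ 9 := by
  refine (Polynomial.natDegree_add_le _ _).trans (max_le ((Polynomial.natDegree_add_le _ _).trans
    (max_le ?_ ?_)) ?_)
  · refine Polynomial.natDegree_sum_le_of_forall_le _ _ fun j hj => ?_
    refine (Polynomial.natDegree_C_mul_le _ _).trans ?_
    simp only [Polynomial.natDegree_X_pow]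
    have := Finset.mem_range.mp hj; omega
  · exact (Polynomial.natDegree_C_mul_le _ _).trans (by simp [Polynomial.natDegree_X_pow]; omega)
  · exact (Polynomial.natDegree_C_mul_le _ _).trans (by simp [Polynomial.natDegree_X_pow]; omega)

lemma natDegree_Qp_le (k : ℕ) (hk : k ≤ 3) (y : ℕ → ℝ) (w A : ℝ) :
    (Qp k y w A).natDegree ≤ 10 := by
  refine (Polynomial.natDegree_sub_le _ _).trans (max_le ((natDegree_Qlow_le k hk y w A).trans
    (by norm_num)) (by simp [Polynomial.natDegree_X_pow]))

lemma coeff_Qp_low (k : ℕ) (hk : k ≤ 3) (y : ℕ → ℝ) (w A : ℝ) {m : ℕ} (hm : m ≤ k) :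
    (Qp k y w A).coeff m = y m / m.factorial := by
  simp only [Qp, Qlow, Polynomial.coeff_sub, Polynomial.coeff_add, Polynomial.finset_sum_coeff,
    Polynomial.coeff_C_mul, Polynomial.coeff_X_pow]
  rw [Finset.sum_eq_single m]
  · have h1 : m ≠ k + 1 := by omega
    have h2 : m ≠ 2*k+2 := by omega
    have h3 : m ≠ 10 := by omega
    simp [h1, h2, h3, if_neg (Ne.symm h1)]
  · intro j _ hj; simp [Ne.symm hj]
  · intro h; exact absurd (Finset.mem_range.mpr (by omega)) h

lemma coeff_Qp_top (k : ℕ) (hk : k ≤ 3) (y : ℕ → ℝ) (w A : ℝ) :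
    (Qp k y w A).coeff (k+1) = w / (k+1).factorial := by
  simp only [Qp, Qlow, Polynomial.coeff_sub, Polynomial.coeff_add, Polynomial.finset_sum_coeff,
    Polynomial.coeff_C_mul, Polynomial.coeff_X_pow]
  rw [Finset.sum_eq_zero]
  · have h2 : ¬ (k+1 = 2*k+2) := by omega
    have h3 : ¬ (k+1 = 10) := by omega
    have h2' : ¬ (k = 2*k+1) := by omega
    simp [h2, h3, h2']
  · intro j hj
    have := Finset.mem_range.mp hj
    have : ¬ (k + 1 = j) := by omega
    simp [this]

lemma eval_Qp (k : ℕ) (y : ℕ → ℝ) (w A : ℝ) (u : ℝ) :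
    (Qp k y w A).eval u = (Qp k y w 0).eval u + A * u ^ (2*k+2) := by
  simp [Qp, Qlow]; ring

/-- uniform upper bound -/
lemma exists_upper (k : ℕ) (hk : k ≤ 3) (y : ℕ → ℝ) (w A : ℝ) :
    ∃ Cb : ℝ, ∀ u : ℝ, (Qp k y w A).eval u ≤ Cb - u ^ 10 / 2 := by
  obtain ⟨S, hS, hSb⟩ := abs_eval_le (Qlow k y w A) (natDegree_Qlow_le k hk y w A)
  refine ⟨S + S * (2*S) ^ 9 + 1, fun u => ?_⟩
  have h1 : (Qp k y w A).eval u = (Qlow k y w A).eval u - u ^ 10 := by simp [Qp]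
  rw [h1]
  have h2 : (Qlow k y w A).eval u ≤ S * (1 + |u| ^ 9) := le_trans (le_abs_self _) (hSb u)
  have key : S * |u| ^ 9 ≤ u ^ 10 / 2 + S * (2*S) ^ 9 := by
    rcases le_or_gt |u| (2*S) with h | h
    · have : |u| ^ 9 ≤ (2*S) ^ 9 := pow_le_pow_left₀ (abs_nonneg _) h 9
      nlinarith [pow_nonneg (abs_nonneg u) 9, pow_nonneg (mul_nonneg (by norm_num : (0:ℝ) ≤ 2) hS) 9, sq_nonneg u, pow_nonneg (sq_nonneg u) 5]
    · have h0 : 0 ≤ |u| := abs_nonneg u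
      have h10 : |u| ^ 10 = u ^ 10 := by
        rw [← abs_pow]; exact abs_of_nonneg (by positivity)
      have : S * |u| ^ 9 ≤ (|u| / 2) * |u| ^ 9 := by
        refine mul_le_mul_of_nonneg_right (by linarith) (by positivity)
      have h11 : (|u| / 2) * |u| ^ 9 = |u| ^ 10 / 2 := by ring
      nlinarith [pow_nonneg (mul_nonneg (by norm_num : (0:ℝ) ≤ 2) hS) 9]
  nlinarith



lemma integrable_expP (P : ℝ[X]) (Cb : ℝ) (hC : ∀ u : ℝ, P.eval u ≤ Cb - u ^ 10 / 2) :
    Integrable (fun u : ℝ => Real.exp (P.eval u)) := by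
  have key : ∀ u : ℝ, P.eval u ≤ (Cb + 1) + -(1/2 * u ^ 2) := by
    intro u
    have h : u ^ 2 / 2 - 1 ≤ u ^ 10 / 2 := by
      rcases le_or_gt (u^2) 1 with h | h
      · nlinarith [pow_nonneg (sq_nonneg u) 5, sq_nonneg u]
      · have : u ^ 2 ≤ u ^ 10 := by
          calc u ^ 2 ≤ (u ^ 2) ^ 5 := le_self_pow₀ h.le (by norm_num)
          _ = u ^ 10 := by ring
        linarith
    have := hC u
    nlinarith
  refine Integrable.mono' (g := fun u : ℝ => Real.exp (Cb + 1) * Real.exp (-(1/2 * u ^ 2)))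
    ((((integrable_exp_neg_mul_sq (by norm_num : (0:ℝ) < 1/2)).const_mul
        (Real.exp (Cb + 1))).congr ?_))
    ((Real.continuous_exp.comp ((contDiff_eval P (n := 0)).continuous)).aestronglyMeasurable) ?_
  · filter_upwards with u
    simp [neg_mul]
  · filter_upwards with u
    rw [Real.norm_eq_abs, abs_of_nonneg (Real.exp_nonneg _), ← Real.exp_add]
    exact Real.exp_le_exp.mpr (key u)

section norm
variable (k : ℕ) (y : ℕ → ℝ) (w : ℝ)

lemma integrable_Q (hk : k ≤ 3) (A : ℝ) : Integrable (fun u : ℝ => Real.exp ((Qp k y w A).eval u)) := by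
  obtain ⟨Cb, hCb⟩ := exists_upper k hk y w A
  exact integrable_expP _ Cb hCb

lemma pow_even_nonneg (u : ℝ) : 0 ≤ u ^ (2*k+2) := by
  have : u ^ (2*k+2) = (u ^ (k+1)) ^ 2 := by
    rw [← pow_mul]; ring_nf
  rw [this]; positivity

lemma F_mono {A A' : ℝ} (h : A ≤ A') (u : ℝ) :
    Real.exp ((Qp k y w A).eval u) ≤ Real.exp ((Qp k y w A').eval u) := by
  rw [eval_Qp k y w A, eval_Qp k y w A']
  exact Real.exp_le_exp.mpr (by nlinarith [pow_even_nonneg k u])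

lemma continuous_F (u : ℝ) : Continuous fun A : ℝ => Real.exp ((Qp k y w A).eval u) := by
  have : (fun A : ℝ => Real.exp ((Qp k y w A).eval u)) =
      fun A : ℝ => Real.exp ((Qp k y w 0).eval u + A * u ^ (2*k+2)) := by
    funext A; rw [eval_Qp]
  rw [this]
  exact Real.continuous_exp.comp (continuous_const.add (continuous_id.mul continuous_const))

lemma continuous_Z (hk : k ≤ 3) :
    Continuous fun A : ℝ => ∫ u : ℝ, Real.exp ((Qp k y w A).eval u) := by
  rw [continuous_iff_continuousAt]
  intro A₀
  refine continuousAt_of_dominated (bound := fun u => Real.exp ((Qp k y w (A₀+1)).eval u))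
    ?_ ?_ (integrable_Q k y w hk (A₀+1)) ?_
  · filter_upwards with A
    exact (Real.continuous_exp.comp (contDiff_eval _ (n := 0)).continuous).aestronglyMeasurable
  · filter_upwards [isOpen_Iio.mem_nhds (show A₀ < A₀ + 1 by linarith)] with A hA
    filter_upwards with u
    rw [Real.norm_eq_abs, abs_of_nonneg (Real.exp_nonneg _)]
    exact F_mono k y w (le_of_lt hA) u
  · filter_upwards with u
    exact (continuous_F k y w u).continuousAt

lemma Z_tendsto_zero (hk : k ≤ 3) :
    Tendsto (fun A : ℝ => ∫ u : ℝ, Real.exp ((Qp k y w A).eval u)) atBot (nhds 0) := by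
  have h0 : ∀ᵐ u : ℝ, u ≠ 0 := by
    rw [ae_iff]
    have : {u : ℝ | ¬ u ≠ 0} = {0} := by ext u; simp
    rw [this]
    exact Real.volume_singleton
  have := tendsto_integral_filter_of_dominated_convergence
    (F := fun A (u : ℝ) => Real.exp ((Qp k y w A).eval u))
    (f := fun _ : ℝ => (0:ℝ)) (bound := fun u => Real.exp ((Qp k y w 0).eval u))
    (l := atBot) ?_ ?_ (integrable_Q k y w hk 0) ?_
  · simpa using this
  · filter_upwards with A
    exact (Real.continuous_exp.comp (contDiff_eval _ (n := 0)).continuous).aestronglyMeasurable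
  · filter_upwards [eventually_le_atBot (0:ℝ)] with A hA
    filter_upwards with u
    rw [Real.norm_eq_abs, abs_of_nonneg (Real.exp_nonneg _)]
    exact F_mono k y w hA u
  · filter_upwards [h0] with u hu
    have hpos : 0 < u ^ (2*k+2) := by
      have h1 : u ^ (k+1) ≠ 0 := pow_ne_zero _ hu
      have : u ^ (2*k+2) = (u ^ (k+1)) ^ 2 := by rw [← pow_mul]; ring_nf
      rw [this]; positivity
    have h1 : Tendsto (fun A : ℝ => (Qp k y w 0).eval u + A * u ^ (2*k+2)) atBot atBot :=
      tendsto_atBot_add_const_left _ _ (Tendsto.atBot_mul_const hpos tendsto_id)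
    have h2 : Tendsto (fun A : ℝ => Real.exp ((Qp k y w 0).eval u + A * u ^ (2*k+2)))
        atBot (nhds 0) := Real.tendsto_exp_atBot.comp h1
    refine h2.congr fun A => ?_
    rw [eval_Qp k y w A]

lemma Z_large (hk : k ≤ 3) : ∃ A₁ : ℝ, 0 ≤ A₁ ∧ 1 ≤ ∫ u : ℝ, Real.exp ((Qp k y w A₁).eval u) := by
  obtain ⟨S, hS, hSb⟩ := abs_eval_le (Qp k y w 0) (natDegree_Qp_le k hk y w 0)
  set L : ℝ := S * (1 + 2 ^ 10) with hL
  have hL0 : 0 ≤ L := by positivity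
  refine ⟨L, hL0, ?_⟩
  have hlow : ∀ u ∈ Set.Icc (1:ℝ) 2, (1:ℝ) ≤ Real.exp ((Qp k y w L).eval u) := by
    intro u hu
    obtain ⟨hu1, hu2⟩ := hu
    have habs : |u| ≤ 2 := by rw [abs_of_nonneg (by linarith)]; exact hu2
    have hb : |(Qp k y w 0).eval u| ≤ L := by
      refine (hSb u).trans ?_
      rw [hL]
      have : |u| ^ 10 ≤ 2 ^ 10 := pow_le_pow_left₀ (abs_nonneg _) habs 10
      nlinarith
    have hpow : (1:ℝ) ≤ u ^ (2*k+2) := one_le_pow₀ hu1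
    have : (0:ℝ) ≤ (Qp k y w L).eval u := by
      rw [eval_Qp]
      have := abs_le.mp hb
      nlinarith
    calc (1:ℝ) = Real.exp 0 := by rw [Real.exp_zero]
    _ ≤ _ := Real.exp_le_exp.mpr this
  calc (1:ℝ) = 1 * (volume (Set.Icc (1:ℝ) 2)).toReal := by
        rw [Real.volume_Icc]; norm_num
  _ ≤ ∫ u in Set.Icc (1:ℝ) 2, Real.exp ((Qp k y w L).eval u) := by
        refine setIntegral_ge_of_const_le_real measurableSet_Icc ?_ hlow
          ((integrable_Q k y w hk L).integrableOn)
        rw [Real.volume_Icc]; exact ENNReal.ofReal_ne_top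
  _ ≤ ∫ u : ℝ, Real.exp ((Qp k y w L).eval u) := by
        refine setIntegral_le_integral (integrable_Q k y w hk L) ?_
        filter_upwards with u
        exact Real.exp_nonneg _

lemma exists_A (hk : k ≤ 3) : ∃ A : ℝ, (∫ u : ℝ, Real.exp ((Qp k y w A).eval u)) = 1 := by
  obtain ⟨A₁, hA₁0, hA₁⟩ := Z_large k y w hk
  have hsmall := (Z_tendsto_zero k y w hk).eventually_lt_const (show (0:ℝ) < 1 by norm_num)
  obtain ⟨A₀, hA₀lt, hA₀le⟩ := (hsmall.and (eventually_le_atBot A₁)).exists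
  have hsub := intermediate_value_Icc hA₀le ((continuous_Z k y w hk).continuousOn)
  have h1 : (1:ℝ) ∈ Set.Icc (∫ u : ℝ, Real.exp ((Qp k y w A₀).eval u))
      (∫ u : ℝ, Real.exp ((Qp k y w A₁).eval u)) := ⟨le_of_lt hA₀lt, hA₁⟩
  obtain ⟨A, _, hA⟩ := hsub h1
  exact ⟨A, hA⟩

end norm

lemma tendsto_shift (c : ℝ) : Tendsto (fun x : ℝ => x - c) (atTop ⊔ atBot) (atTop ⊔ atBot) := by
  refine tendsto_sup.mpr ⟨?_, ?_⟩
  · have := tendsto_atTop_add_const_right atTop (-c) (tendsto_id (α := ℝ))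
    exact (this.congr fun x => by simp [sub_eq_add_neg]).mono_right le_sup_left
  · have := tendsto_atBot_add_const_right atBot (-c) (tendsto_id (α := ℝ))
    exact (this.congr fun x => by simp [sub_eq_add_neg]).mono_right le_sup_right

lemma iteratedDeriv_shift (f : ℝ → ℝ) (c : ℝ) (n : ℕ) (x : ℝ) :
    iteratedDeriv n (fun t : ℝ => f (t - c)) x = iteratedDeriv n f (x - c) := by
  have h : (fun t : ℝ => f (t - c)) = fun t : ℝ => f (t + (-c)) := by
    funext t; rw [sub_eq_add_neg]
  rw [h, iteratedDeriv_comp_add_const]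
  simp [sub_eq_add_neg]

/-- The key construction: a density in `memP` with prescribed log-jet. -/
lemma exists_density (x₀ : ℝ) (k : ℕ) (hk : k ≤ 3) (y : ℕ → ℝ) (w : ℝ) :
    ∃ q : ℝ → ℝ, memP q ∧
      (∀ j, j ≤ k → iteratedDeriv j (fun t => Real.log (q t)) x₀ = y j) ∧
      iteratedDeriv (k+1) (fun t => Real.log (q t)) x₀ = w := by
  -- rescale the jet by factorials handled in Qp coefficients
  obtain ⟨A, hA⟩ := exists_A k y w hk
  set Q : ℝ[X] := Qp k y w A with hQdef
  obtain ⟨Cb, hCb⟩ := exists_upper k hk y w A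
  have hdeg : Q.natDegree ≤ 10 := natDegree_Qp_le k hk y w A
  set q : ℝ → ℝ := fun x => Real.exp (Q.eval (x - x₀)) with hqdef
  have hqpos : ∀ x, 0 < q x := fun x => Real.exp_pos _
  have hlog : (fun t => Real.log (q t)) = fun t => Q.eval (t - x₀) := by
    funext t; simp [hqdef, Real.log_exp]
  -- iterated derivatives of q
  have hq_id : ∀ n : ℕ, ∀ x : ℝ,
      iteratedDeriv n q x = (Rp Q n).eval (x - x₀) * Real.exp (Q.eval (x - x₀)) := by
    intro n x
    have : iteratedDeriv n q x
        = iteratedDeriv n (fun u : ℝ => Real.exp (Q.eval u)) (x - x₀) := by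
      rw [hqdef]; exact iteratedDeriv_shift (fun u : ℝ => Real.exp (Q.eval u)) x₀ n x
    rw [this, iteratedDeriv_expQ]
  -- jet values
  have hjet : ∀ n : ℕ, iteratedDeriv n (fun t => Real.log (q t)) x₀
      = (n.factorial : ℝ) * Q.coeff n := by
    intro n
    rw [hlog, iteratedDeriv_shift (fun u : ℝ => Q.eval u) x₀ n x₀, sub_self,
      iteratedDeriv_eval_zero]
  refine ⟨q, ⟨?_, hqpos, ?_, ?_, ?_⟩, ?_, ?_⟩
  · -- integral equals 1
    have : (∫ x : ℝ, q x) = ∫ u : ℝ, Real.exp (Q.eval u) :=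
      integral_sub_right_eq_self (fun u : ℝ => Real.exp (Q.eval u)) x₀
    rw [this, hA]
  · -- smoothness
    exact (Real.contDiff_exp.comp (contDiff_eval Q)).comp (contDiff_id.sub contDiff_const)
  · -- P3 decay
    intro m hm j hj
    obtain ⟨S, hS, hSb⟩ := abs_eval_le (Rp Q j) (le_refl (Rp Q j).natDegree)
    set D := (Rp Q j).natDegree
    have hml := (ML m S Cb hm.le hS D).comp (tendsto_shift x₀)
    refine squeeze_zero_norm' ?_ hml
    filter_upwards [eventually_abs_ge (2*|x₀| + 2)] with x hx
    have hx0 : (1:ℝ) ≤ |x| := by linarith [abs_nonneg x₀]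
    have hux : |x| ≤ 2 * |x - x₀| := by
      have h1 : |x| - |x₀| ≤ |x - x₀| := by
        have := abs_sub_abs_le_abs_sub x x₀; linarith
      have h2 : |x₀| ≤ |x| / 2 := by linarith
      linarith
    have hrp : |x| ^ m ≤ (2 * |x - x₀|) ^ m :=
      Real.rpow_le_rpow (abs_nonneg x) hux hm.le
    rw [hq_id j x, Real.norm_eq_abs, abs_mul, abs_mul, abs_of_nonneg (Real.rpow_nonneg (abs_nonneg x) m),
      abs_of_nonneg (Real.exp_nonneg _)]
    have hexp : Real.exp (Q.eval (x - x₀)) ≤ Real.exp (Cb - (x - x₀) ^ 10 / 2) :=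
      Real.exp_le_exp.mpr (hCb (x - x₀))
    calc |x| ^ m * (|(Rp Q j).eval (x - x₀)| * Real.exp (Q.eval (x - x₀)))
        ≤ (2 * |x - x₀|) ^ m * ((S * (1 + |x - x₀| ^ D)) * Real.exp (Cb - (x - x₀) ^ 10 / 2)) := by
          refine mul_le_mul hrp ?_ (by positivity) (Real.rpow_nonneg (by positivity) m)
          refine mul_le_mul (hSb _) hexp (Real.exp_nonneg _) ?_
          have := abs_nonneg ((Rp Q j).eval (x - x₀))
          nlinarith [hSb (x - x₀)]
      _ = (2 * |x - x₀|) ^ m * (S * (1 + |x - x₀| ^ D)) * Real.exp (Cb - (x - x₀) ^ 10 / 2) := by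
          ring
  · -- P4 decay
    refine ⟨100, by norm_num, fun j hj1 hj4 => ?_⟩
    obtain ⟨S, hS, hSb⟩ := abs_eval_le (Rp Q j)
      (show (Rp Q j).natDegree ≤ 99 from (natDegree_Rp_le Q hdeg j).trans (by omega))
    have hml := ML2 (S * (1 + 2 ^ 99))
    refine squeeze_zero_norm' ?_ hml
    filter_upwards [eventually_abs_ge (2*|x₀| + 2)] with x hx
    have hx0 : (1:ℝ) ≤ |x| := by linarith [abs_nonneg x₀]
    have hxpos : (0:ℝ) < |x| := by linarith
    have hux : |x - x₀| ≤ 2 * |x| := by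
      have := abs_sub x x₀
      have h1 : |x - x₀| ≤ |x| + |x₀| := abs_sub _ _
      have h2 : |x₀| ≤ |x| / 2 := by linarith
      linarith
    have hdivq : iteratedDeriv j q x / q x = (Rp Q j).eval (x - x₀) := by
      rw [hq_id j x, hqdef]
      exact mul_div_cancel_right₀ _ (Real.exp_ne_zero _)
    rw [hdivq, Real.norm_eq_abs, abs_mul, abs_of_nonneg (Real.rpow_nonneg (abs_nonneg x) _)]
    have hb1 : |(Rp Q j).eval (x - x₀)| ≤ S * (1 + 2 ^ 99) * |x| ^ (99:ℕ) := by
      refine (hSb _).trans ?_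
      have h1 : |x - x₀| ^ (99:ℕ) ≤ (2 * |x|) ^ (99:ℕ) :=
        pow_le_pow_left₀ (abs_nonneg _) hux 99
      have h2 : (2 * |x|) ^ (99:ℕ) = 2 ^ (99:ℕ) * |x| ^ (99:ℕ) := by rw [mul_pow]
      have h3 : (1:ℝ) ≤ |x| ^ (99:ℕ) := one_le_pow₀ hx0
      nlinarith [pow_nonneg (abs_nonneg x) 99]
    calc |x| ^ (-(100:ℝ)) * |(Rp Q j).eval (x - x₀)|
        ≤ |x| ^ (-(100:ℝ)) * (S * (1 + 2 ^ 99) * |x| ^ (99:ℕ)) :=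
          mul_le_mul_of_nonneg_left hb1 (Real.rpow_nonneg (abs_nonneg x) _)
      _ = S * (1 + 2 ^ 99) * (|x| ^ (-(100:ℝ)) * |x| ^ ((99:ℕ):ℝ)) := by
          rw [Real.rpow_natCast]; ring
      _ = S * (1 + 2 ^ 99) * |x|⁻¹ := by
          rw [← Real.rpow_add hxpos]
          norm_num [Real.rpow_neg_one]
  · -- jet values low
    intro j hj
    rw [hjet j, hQdef, coeff_Qp_low k hk y w A hj]
    field_simp
  · rw [hjet (k+1), hQdef, coeff_Qp_top k hk y w A]
    field_simp


end S17proof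

theorem statement17 (k : ℕ) (hk : k ≤ 3)
    (a b : ℝ → (Fin (k + 1) → ℝ) → ℝ)
    (ha : ContDiff ℝ 1 (fun v : ℝ × (Fin (k + 1) → ℝ) => a v.1 v.2))
    (hb : ContDiff ℝ 1 (fun v : ℝ × (Fin (k + 1) → ℝ) => b v.1 v.2))
    (hsol : ∀ p, memP p → ∀ x : ℝ,
      iteratedDeriv (k + 1) (fun t => Real.log (p t)) x *
        a x (fun j => iteratedDeriv (j : ℕ) (fun t => Real.log (p t)) x) =
      b x (fun j => iteratedDeriv (j : ℕ) (fun t => Real.log (p t)) x)) :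
    ∀ p, memP p → ∀ x : ℝ,
      a x (fun j => iteratedDeriv (j : ℕ) (fun t => Real.log (p t)) x) = 0 := by
  intro p _ x
  obtain ⟨q0, hq0P, hq0jet, hq0top⟩ :=
    S17proof.exists_density x k hk (fun j => iteratedDeriv j (fun t => Real.log (p t)) x) 0
  obtain ⟨q1, hq1P, hq1jet, hq1top⟩ :=
    S17proof.exists_density x k hk (fun j => iteratedDeriv j (fun t => Real.log (p t)) x) 1
  have h0 := hsol q0 hq0P x
  have h1 := hsol q1 hq1P x
  have hv0 : (fun j : Fin (k+1) => iteratedDeriv (j : ℕ) (fun t => Real.log (q0 t)) x)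
      = fun j : Fin (k+1) => iteratedDeriv (j : ℕ) (fun t => Real.log (p t)) x :=
    funext fun j => hq0jet j (Nat.lt_succ_iff.mp j.isLt)
  have hv1 : (fun j : Fin (k+1) => iteratedDeriv (j : ℕ) (fun t => Real.log (q1 t)) x)
      = fun j : Fin (k+1) => iteratedDeriv (j : ℕ) (fun t => Real.log (p t)) x :=
    funext fun j => hq1jet j (Nat.lt_succ_iff.mp j.isLt)
  rw [hv0, hq0top] at h0
  rw [hv1, hq1top] at h1
  linarith
end
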